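/- arXiv:1904.09748 — 5 statements merged into one kernel-verified Lean document; each statement's English description precedes it below -/
import Mathlib

section
/- Fix integers m ≥ 0, n ≥ 1 and k ≥ 1. Consider pairs (π, h) where π is a set partition of {1, …, n} into k nonempty blocks and h : {1, …, n} → ℕ is a function such that every block B of π satisfies: 0 ∈ h(B), and for every a ∈ h(B) with a < max h(B) there exists b ∈ h(B) with a < b ≤ a + m. Then the map sending (π, h) to the affine subspace ⋂_{B ∈ π} {x ∈ ℝ^n : x_i + h(i) = x_j + h(j) for all i, j ∈ B} is a bijection from the set of such pairs onto the set L_k(C^m_n) of k-dimensional flats of the extended Catalan arrangement C^m_n. -/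
open Set

/-- The affine hyperplane `{x : ℝⁿ | x i - x j = a}`. -/
def hyp (n : ℕ) (i j : Fin n) (a : ℤ) : Set (Fin n → ℝ) :=
  {x | x i - x j = (a : ℝ)}

/-- The extended Catalan arrangement `C^m_n`: hyperplanes `x_i - x_j = a` for
`i < j` and `-m ≤ a ≤ m`. -/
def CatalanArr (m n : ℕ) : Set (Set (Fin n → ℝ)) :=
  {H | ∃ i j : Fin n, ∃ a : ℤ, i < j ∧ -(m : ℤ) ≤ a ∧ a ≤ (m : ℤ) ∧ H = hyp n i j a}

/-- The extended Shi arrangement `S^m_n`: hyperplanes `x_i - x_j = a` for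
`i < j` and `1 - m ≤ a ≤ m`. -/
def ShiArr (m n : ℕ) : Set (Set (Fin n → ℝ)) :=
  {H | ∃ i j : Fin n, ∃ a : ℤ, 1 - (m : ℤ) ≤ a ∧ a ≤ (m : ℤ) ∧ i < j ∧ H = hyp n i j a}

/-- The flats of an arrangement: nonempty intersections of subcollections
(the empty intersection being the whole space). -/
def flats {n : ℕ} (A : Set (Set (Fin n → ℝ))) : Set (Set (Fin n → ℝ)) :=
  {F | F.Nonempty ∧ ∃ B ⊆ A, F = ⋂₀ B}

/-- The dimension of a flat, i.e. the dimension of the affine subspace it spans. -/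
noncomputable def flatDim {n : ℕ} (F : Set (Fin n → ℝ)) : ℕ :=
  Module.finrank ℝ (affineSpan ℝ F).direction

/-- The set of `k`-dimensional flats of an arrangement. -/
def Lk {n : ℕ} (A : Set (Set (Fin n → ℝ))) (k : ℕ) : Set (Set (Fin n → ℝ)) :=
  {F | F ∈ flats A ∧ flatDim F = k}

/-- `π` is a set partition of `{1,…,n}` into `k` nonempty blocks. -/
def IsPartitionInto {n : ℕ} (π : Finset (Finset (Fin n))) (k : ℕ) : Prop :=
  π.card = k ∧ (∀ B ∈ π, B.Nonempty) ∧
    (↑π : Set (Finset (Fin n))).PairwiseDisjoint id ∧ ∀ v : Fin n, ∃ B ∈ π, v ∈ B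

/-- The Catalan condition on a block `B`: `0 ∈ h(B)` and every `a ∈ h(B)` below
`max h(B)` is followed by some `b ∈ h(B)` with `a < b ≤ a + m`. -/
def CatalanBlockCond (m : ℕ) {n : ℕ} (h : Fin n → ℕ) (B : Finset (Fin n)) : Prop :=
  0 ∈ h '' ↑B ∧
    ∀ a ∈ h '' ↑B, a < sSup (h '' ↑B) → ∃ b ∈ h '' ↑B, a < b ∧ b ≤ a + m

namespace CFB


variable {n : ℕ}

def fmap (π : Finset (Finset (Fin n))) (h : Fin n → ℕ) : Set (Fin n → ℝ) :=
  ⋂ B ∈ π, {x : Fin n → ℝ | ∀ i ∈ B, ∀ j ∈ B, x i + (h i : ℝ) = x j + (h j : ℝ)}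

def sameB (π : Finset (Finset (Fin n))) (i j : Fin n) : Prop :=
  ∃ B ∈ π, i ∈ B ∧ j ∈ B

lemma mem_fmap {π : Finset (Finset (Fin n))} {h : Fin n → ℕ} {x : Fin n → ℝ} :
    x ∈ fmap π h ↔ ∀ B ∈ π, ∀ i ∈ B, ∀ j ∈ B, x i + (h i : ℝ) = x j + (h j : ℝ) := by
  simp [fmap]

lemma mem_fmap' {π : Finset (Finset (Fin n))} {h : Fin n → ℕ} {x : Fin n → ℝ} :
    x ∈ fmap π h ↔ ∀ i j, sameB π i j → x i + (h i : ℝ) = x j + (h j : ℝ) := by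
  rw [mem_fmap]
  constructor
  · rintro H i j ⟨B, hB, hi, hj⟩; exact H B hB i hi j hj
  · intro H B hB i hi j hj; exact H i j ⟨B, hB, hi, hj⟩

lemma block_eq {π : Finset (Finset (Fin n))}
    (hdisj : (↑π : Set (Finset (Fin n))).PairwiseDisjoint id)
    {B B' : Finset (Fin n)} (hB : B ∈ π) (hB' : B' ∈ π) {u : Fin n}
    (h1 : u ∈ B) (h2 : u ∈ B') : B = B' := by
  by_contra hne
  exact (Finset.disjoint_left.mp (hdisj (Finset.mem_coe.mpr hB) (Finset.mem_coe.mpr hB') hne) h1) h2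

def Vsub (π : Finset (Finset (Fin n))) : Submodule ℝ (Fin n → ℝ) where
  carrier := {v | ∀ i j, sameB π i j → v i = v j}
  add_mem' := by intro a b ha hb i j hij; simp [ha i j hij, hb i j hij]
  zero_mem' := by intro i j _; rfl
  smul_mem' := by intro c a ha i j hij; simp [ha i j hij]

lemma mem_Vsub {π : Finset (Finset (Fin n))} {v : Fin n → ℝ} :
    v ∈ Vsub π ↔ ∀ i j, sameB π i j → v i = v j := Iff.rfl

lemma fmap_eq_mk' (π : Finset (Finset (Fin n))) (h : Fin n → ℕ) :
    fmap π h = ↑(AffineSubspace.mk' (fun i => -(h i : ℝ)) (Vsub π)) := by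
  ext x
  rw [AffineSubspace.mem_coe, AffineSubspace.mem_mk', mem_Vsub, mem_fmap']
  constructor
  · intro H i j hij
    have := H i j hij
    simp only [vsub_eq_sub, Pi.sub_apply]
    ring_nf
    linarith
  · intro H i j hij
    have := H i j hij
    simp only [vsub_eq_sub, Pi.sub_apply] at this
    linarith

lemma fmap_nonempty (π : Finset (Finset (Fin n))) (h : Fin n → ℕ) :
    (fmap π h).Nonempty := by
  refine ⟨fun i => -(h i : ℝ), mem_fmap.mpr ?_⟩
  intro B _ i _ j _
  ring

lemma finrank_Vsub {π : Finset (Finset (Fin n))}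
    (hne : ∀ B ∈ π, B.Nonempty)
    (hdisj : (↑π : Set (Finset (Fin n))).PairwiseDisjoint id)
    (hcov : ∀ v : Fin n, ∃ B ∈ π, v ∈ B) :
    Module.finrank ℝ (Vsub π) = π.card := by
  classical
  have hblk : ∀ i : Fin n, ∃ B : {B // B ∈ π}, i ∈ B.1 := by
    intro i; obtain ⟨B, hB, hi⟩ := hcov i; exact ⟨⟨B, hB⟩, hi⟩
  choose blk hblkmem using hblk
  have hpick : ∀ B : {B // B ∈ π}, ∃ i, i ∈ B.1 := fun B => hne B.1 B.2
  choose pick hpickmem using hpick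
  have hblkuniq : ∀ (i : Fin n) (B : {B // B ∈ π}), i ∈ B.1 → blk i = B := by
    intro i B hi
    exact Subtype.ext (block_eq hdisj (blk i).2 B.2 (hblkmem i) hi)
  set Φ := LinearMap.funLeft ℝ ℝ blk with hΦ
  have hsurj : Function.Surjective blk := fun B => ⟨pick B, hblkuniq (pick B) B (hpickmem B)⟩
  have hinj := LinearMap.funLeft_injective_of_surjective ℝ ℝ blk hsurj
  have hrange : LinearMap.range Φ = Vsub π := by
    ext v
    constructor
    · rintro ⟨c, rfl⟩ i j ⟨B, hB, hi, hj⟩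
      have h1 : blk i = ⟨B, hB⟩ := hblkuniq i ⟨B, hB⟩ hi
      have h2 : blk j = ⟨B, hB⟩ := hblkuniq j ⟨B, hB⟩ hj
      show c (blk i) = c (blk j)
      rw [h1, h2]
    · intro hv
      refine ⟨fun B => v (pick B), funext fun i => ?_⟩
      exact hv _ i ⟨(blk i).1, (blk i).2, hpickmem _, hblkmem i⟩
  have : Module.finrank ℝ (LinearMap.range Φ) = Module.finrank ℝ ({B // B ∈ π} → ℝ) :=
    (LinearEquiv.finrank_eq (LinearEquiv.ofInjective Φ hinj)).symm
  rw [← hrange, this, Module.finrank_pi]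
  exact Fintype.card_coe π

lemma flatDim_fmap {π : Finset (Finset (Fin n))} (h : Fin n → ℕ)
    (hne : ∀ B ∈ π, B.Nonempty)
    (hdisj : (↑π : Set (Finset (Fin n))).PairwiseDisjoint id)
    (hcov : ∀ v : Fin n, ∃ B ∈ π, v ∈ B) :
    flatDim (fmap π h) = π.card := by
  rw [flatDim, fmap_eq_mk', AffineSubspace.affineSpan_coe, AffineSubspace.direction_mk',
    finrank_Vsub hne hdisj hcov]


variable {n : ℕ}


lemma direct_step {m : ℕ} {π : Finset (Finset (Fin n))} {h : Fin n → ℕ} {i j : Fin n}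
    (hij : sameB π i j) (h1 : h i ≤ h j) (h2 : h j ≤ h i + m)
    (x : Fin n → ℝ) (hx : ∀ H ∈ CatalanArr m n, fmap π h ⊆ H → x ∈ H) :
    x i + (h i : ℝ) = x j + (h j : ℝ) := by
  obtain ⟨B, hB, hi, hj⟩ := hij
  rcases lt_trichotomy i j with hlt | heq | hgt
  · have hH : hyp n i j ((h j : ℤ) - (h i : ℤ)) ∈ CatalanArr m n :=
      ⟨i, j, _, hlt, by omega, by omega, rfl⟩
    have hsub : fmap π h ⊆ hyp n i j ((h j : ℤ) - (h i : ℤ)) := by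
      intro y hy
      have := mem_fmap.mp hy B hB i hi j hj
      show y i - y j = _
      push_cast
      linarith
    have := hx _ hH hsub
    have h3 : x i - x j = ((h j : ℤ) - (h i : ℤ) : ℤ) := this
    push_cast at h3
    linarith
  · rw [heq]
  · have hH : hyp n j i ((h i : ℤ) - (h j : ℤ)) ∈ CatalanArr m n :=
      ⟨j, i, _, hgt, by omega, by omega, rfl⟩
    have hsub : fmap π h ⊆ hyp n j i ((h i : ℤ) - (h j : ℤ)) := by
      intro y hy
      have := mem_fmap.mp hy B hB i hi j hj
      show y j - y i = _
      push_cast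
      linarith
    have := hx _ hH hsub
    have h3 : x j - x i = ((h i : ℤ) - (h j : ℤ) : ℤ) := this
    push_cast at h3
    linarith

lemma chain_aux {m : ℕ} {π : Finset (Finset (Fin n))} {h : Fin n → ℕ}
    (hcat : ∀ B ∈ π, CatalanBlockCond m h B) :
    ∀ d : ℕ, ∀ i j : Fin n, sameB π i j → h i ≤ h j → h j - h i ≤ d →
      ∀ x : Fin n → ℝ, (∀ H ∈ CatalanArr m n, fmap π h ⊆ H → x ∈ H) →
      x i + (h i : ℝ) = x j + (h j : ℝ) := by
  intro d
  induction d with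
  | zero =>
    intro i j hij h1 hd x hx
    exact direct_step hij h1 (by omega) x hx
  | succ d ih =>
    intro i j hij h1 hd x hx
    by_cases hcase : h j ≤ h i + m
    · exact direct_step hij h1 hcase x hx
    · obtain ⟨B, hB, hi, hj⟩ := hij
      have hij' : h i < h j := by omega
      have hfin : (h '' (↑B : Set (Fin n))).Finite := B.finite_toSet.image h
      have hmax : h i < sSup (h '' (↑B : Set (Fin n))) :=
        lt_of_lt_of_le hij' (le_csSup hfin.bddAbove ⟨j, hj, rfl⟩)
      obtain ⟨b, hbmem, hab1, hab2⟩ := (hcat B hB).2 (h i) ⟨i, hi, rfl⟩ hmax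
      obtain ⟨u, hu, hub⟩ := hbmem
      have e1 := direct_step (m := m) ⟨B, hB, hi, hu⟩ (by omega) (by omega) x hx
      by_cases h2 : h j ≤ h u
      · have e2 := direct_step (m := m) ⟨B, hB, hj, hu⟩ (by omega) (by omega) x hx
        linarith
      · have e2 := ih u j ⟨B, hB, hu, hj⟩ (by omega) (by omega) x hx
        linarith

lemma chain {m : ℕ} {π : Finset (Finset (Fin n))} {h : Fin n → ℕ}
    (hcat : ∀ B ∈ π, CatalanBlockCond m h B) {i j : Fin n} (hij : sameB π i j)
    (x : Fin n → ℝ) (hx : ∀ H ∈ CatalanArr m n, fmap π h ⊆ H → x ∈ H) :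
    x i + (h i : ℝ) = x j + (h j : ℝ) := by
  rcases le_total (h i) (h j) with h1 | h1
  · exact chain_aux hcat (h j - h i) i j hij h1 le_rfl x hx
  · have hji : sameB π j i := by obtain ⟨B, hB, hi2, hj2⟩ := hij; exact ⟨B, hB, hj2, hi2⟩
    exact (chain_aux hcat (h i - h j) j i hji h1 le_rfl x hx).symm

lemma fmap_mem_flats {m : ℕ} {π : Finset (Finset (Fin n))} {h : Fin n → ℕ}
    (hcat : ∀ B ∈ π, CatalanBlockCond m h B) :
    fmap π h ∈ flats (CatalanArr m n) := by
  refine ⟨fmap_nonempty π h, {H | H ∈ CatalanArr m n ∧ fmap π h ⊆ H}, fun H hH => hH.1, ?_⟩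
  apply Subset.antisymm
  · intro x hx H hH
    exact hH.2 hx
  · intro x hx
    rw [mem_fmap]
    intro B hB i hi j hj
    exact chain hcat ⟨B, hB, hi, hj⟩ x (fun H h1 h2 => hx H ⟨h1, h2⟩)


variable {n : ℕ}

def erel (m : ℕ) (Bs : Set (Set (Fin n → ℝ))) (i j : Fin n) : Prop :=
  (∃ a : ℤ, -(m : ℤ) ≤ a ∧ a ≤ (m : ℤ) ∧ i < j ∧ hyp n i j a ∈ Bs) ∨
  (∃ a : ℤ, -(m : ℤ) ≤ a ∧ a ≤ (m : ℤ) ∧ j < i ∧ hyp n j i a ∈ Bs)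

def conn (m : ℕ) (Bs : Set (Set (Fin n → ℝ))) : Fin n → Fin n → Prop :=
  Relation.EqvGen (erel m Bs)

lemma conn_refl {m : ℕ} {Bs : Set (Set (Fin n → ℝ))} (i : Fin n) : conn m Bs i i :=
  Relation.EqvGen.refl i

lemma conn_symm {m : ℕ} {Bs : Set (Set (Fin n → ℝ))} {i j : Fin n} (h : conn m Bs i j) :
    conn m Bs j i := Relation.EqvGen.symm i j h

lemma conn_trans {m : ℕ} {Bs : Set (Set (Fin n → ℝ))} {i j l : Fin n}
    (h1 : conn m Bs i j) (h2 : conn m Bs j l) : conn m Bs i l :=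
  Relation.EqvGen.trans i j l h1 h2

lemma erel_diff {m : ℕ} {Bs : Set (Set (Fin n → ℝ))} {i j : Fin n} (he : erel m Bs i j)
    {x : Fin n → ℝ} (hx : x ∈ ⋂₀ Bs) {y : Fin n → ℝ} (hy : y ∈ ⋂₀ Bs) :
    x i - x j = y i - y j ∧ x i - x j ≤ m ∧ x j - x i ≤ m := by
  rcases he with ⟨a, ha1, ha2, _, hH⟩ | ⟨a, ha1, ha2, _, hH⟩
  · have h1 : x i - x j = (a : ℝ) := hx _ hH
    have h2 : y i - y j = (a : ℝ) := hy _ hH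
    have hb1 : (a : ℝ) ≤ (m : ℝ) := by exact_mod_cast ha2
    have hb2 : -(m : ℝ) ≤ (a : ℝ) := by exact_mod_cast ha1
    constructor
    · rw [h1, h2]
    · constructor <;> linarith
  · have h1 : x j - x i = (a : ℝ) := hx _ hH
    have h2 : y j - y i = (a : ℝ) := hy _ hH
    have hb1 : (a : ℝ) ≤ (m : ℝ) := by exact_mod_cast ha2
    have hb2 : -(m : ℝ) ≤ (a : ℝ) := by exact_mod_cast ha1
    constructor
    · linarith
    · constructor <;> linarith

lemma conn_const {m : ℕ} {Bs : Set (Set (Fin n → ℝ))} {i j : Fin n} (hc : conn m Bs i j)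
    {x : Fin n → ℝ} (hx : x ∈ ⋂₀ Bs) {y : Fin n → ℝ} (hy : y ∈ ⋂₀ Bs) :
    x i - x j = y i - y j := by
  induction hc with
  | rel p q hr => exact (erel_diff hr hx hy).1
  | refl p => simp
  | symm p q _ ih => linarith
  | trans p q r _ _ ih1 ih2 => linarith

lemma conn_int {m : ℕ} {Bs : Set (Set (Fin n → ℝ))} {i j : Fin n} (hc : conn m Bs i j)
    {x : Fin n → ℝ} (hx : x ∈ ⋂₀ Bs) :
    ∃ d : ℤ, x i - x j = (d : ℝ) := by
  induction hc with
  | rel p q hr =>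
    rcases hr with ⟨a, _, _, _, hH⟩ | ⟨a, _, _, _, hH⟩
    · exact ⟨a, hx _ hH⟩
    · refine ⟨-a, ?_⟩
      have : x q - x p = (a : ℝ) := hx _ hH
      push_cast
      linarith
  | refl p => exact ⟨0, by simp⟩
  | symm p q _ ih =>
    obtain ⟨d, hd⟩ := ih
    exact ⟨-d, by push_cast; linarith⟩
  | trans p q r _ _ ih1 ih2 =>
    obtain ⟨d1, hd1⟩ := ih1
    obtain ⟨d2, hd2⟩ := ih2
    exact ⟨d1 + d2, by push_cast; linarith⟩

lemma add_mem {m : ℕ} {Bs : Set (Set (Fin n → ℝ))} (hBs : Bs ⊆ CatalanArr m n)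
    {x : Fin n → ℝ} (hx : x ∈ ⋂₀ Bs) {v : Fin n → ℝ}
    (hv : ∀ p q, conn m Bs p q → v p = v q) :
    (fun i => x i + v i) ∈ ⋂₀ Bs := by
  intro H hH
  obtain ⟨p, q, a, hpq, ha1, ha2, rfl⟩ := hBs hH
  have hconn : conn m Bs p q := Relation.EqvGen.rel _ _ (Or.inl ⟨a, ha1, ha2, hpq, hH⟩)
  have hx' : x p - x q = (a : ℝ) := hx _ hH
  have hv' := hv p q hconn
  show x p + v p - (x q + v q) = (a : ℝ)
  linarith


lemma subset_of_sameB {n : ℕ} {π σ : Finset (Finset (Fin n))}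
    (hneπ : ∀ B ∈ π, B.Nonempty)
    (hdisjπ : (↑π : Set (Finset (Fin n))).PairwiseDisjoint id)
    (hdisjσ : (↑σ : Set (Finset (Fin n))).PairwiseDisjoint id)
    (hcovσ : ∀ v : Fin n, ∃ B ∈ σ, v ∈ B)
    (h12 : ∀ i j, sameB π i j → sameB σ i j)
    (h21 : ∀ i j, sameB σ i j → sameB π i j) : π ⊆ σ := by
  intro B hB
  obtain ⟨i, hi⟩ := hneπ B hB
  obtain ⟨B', hB', hi'⟩ := hcovσ i
  have hBB : B = B' := by
    ext j
    constructor
    · intro hj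
      obtain ⟨B'', hB'', hi'', hj''⟩ := h12 i j ⟨B, hB, hi, hj⟩
      rwa [block_eq hdisjσ hB'' hB' hi'' hi'] at hj''
    · intro hj
      obtain ⟨B'', hB'', hi'', hj''⟩ := h21 i j ⟨B', hB', hi', hj⟩
      rwa [block_eq hdisjπ hB'' hB hi'' hi] at hj''
  rw [hBB]; exact hB'

lemma surj_aux (m : ℕ) {n : ℕ} (k : ℕ) (hn : 1 ≤ n) {F : Set (Fin n → ℝ)}
    (hF : F ∈ Lk (CatalanArr m n) k) :
    ∃ p : Finset (Finset (Fin n)) × (Fin n → ℕ),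
      (IsPartitionInto p.1 k ∧ ∀ B ∈ p.1, CatalanBlockCond m p.2 B) ∧ fmap p.1 p.2 = F := by
  classical
  obtain ⟨⟨hFne, Bs, hBs, hFeq⟩, hdim⟩ := hF
  obtain ⟨x₀, hx₀⟩ := hFne
  have hx₀' : x₀ ∈ ⋂₀ Bs := hFeq ▸ hx₀
  set C : Fin n → Finset (Fin n) :=
    fun i => Finset.univ.filter (fun j => conn m Bs j i) with hC
  have memC : ∀ i j : Fin n, j ∈ C i ↔ conn m Bs j i := by
    intro i j; simp [hC]
  have selfC : ∀ i, i ∈ C i := fun i => (memC i i).mpr (conn_refl i)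
  have Ceq : ∀ {i j}, conn m Bs i j → C i = C j := by
    intro i j hij
    ext u
    rw [memC, memC]
    exact ⟨fun hu => conn_trans hu hij, fun hu => conn_trans hu (conn_symm hij)⟩
  set π := Finset.image C Finset.univ with hπ
  have hwm0 : ∀ B : Finset (Fin n), ∃ w : Fin n, B.Nonempty → (w ∈ B ∧ ∀ u ∈ B, x₀ u ≤ x₀ w) := by
    intro B
    by_cases hB : B.Nonempty
    · obtain ⟨w, hw1, hw2⟩ := B.exists_max_image x₀ hB
      exact ⟨w, fun _ => ⟨hw1, hw2⟩⟩
    · exact ⟨⟨0, hn⟩, fun hc => absurd hc hB⟩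
  choose wm hwm using hwm0
  set wx : Fin n → Fin n := fun i => wm (C i) with hwx
  have hwx1 : ∀ i, wx i ∈ C i := fun i => (hwm (C i) ⟨i, selfC i⟩).1
  have hwx2 : ∀ i, ∀ u ∈ C i, x₀ u ≤ x₀ (wx i) := fun i => (hwm (C i) ⟨i, selfC i⟩).2
  have wxeq : ∀ {i j}, conn m Bs i j → wx i = wx j := by
    intro i j hij
    show wm (C i) = wm (C j)
    rw [Ceq hij]
  set h : Fin n → ℕ := fun i => (⌊x₀ (wx i) - x₀ i⌋).toNat with hh
  have hcast : ∀ i, (h i : ℝ) = x₀ (wx i) - x₀ i := by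
    intro i
    obtain ⟨d, hd⟩ := conn_int ((memC i (wx i)).mp (hwx1 i)) hx₀'
    have hd0 : (0 : ℝ) ≤ (d : ℝ) := by
      rw [← hd]
      have := hwx2 i i (selfC i)
      linarith
    have hd0' : 0 ≤ d := by exact_mod_cast hd0
    show ((⌊x₀ (wx i) - x₀ i⌋).toNat : ℝ) = _
    rw [hd, Int.floor_intCast]
    exact_mod_cast Int.toNat_of_nonneg hd0'
  have key1 : ∀ {p q}, conn m Bs p q → x₀ p - x₀ q = (h q : ℝ) - (h p : ℝ) := by
    intro p q hc
    have h1 := hcast p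
    have h2 := hcast q
    rw [wxeq hc] at h1
    linarith
  have hFfmap : F = fmap π h := by
    apply Subset.antisymm
    · intro x hx
      rw [mem_fmap]
      rintro B hB p hp q hq
      obtain ⟨i0, -, rfl⟩ := Finset.mem_image.mp hB
      have hcp : conn m Bs p i0 := (memC _ _).mp hp
      have hcq : conn m Bs q i0 := (memC _ _).mp hq
      have hcpq : conn m Bs p q := conn_trans hcp (conn_symm hcq)
      have h1 : x p - x q = x₀ p - x₀ q := conn_const hcpq (hFeq ▸ hx) hx₀'
      have h2 := key1 hcpq
      linarith
    · intro x hx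
      rw [hFeq]
      intro H hH
      obtain ⟨p, q, a, hpq, ha1, ha2, rfl⟩ := hBs hH
      have hcpq : conn m Bs p q := Relation.EqvGen.rel _ _ (Or.inl ⟨a, ha1, ha2, hpq, hH⟩)
      have hsB : q ∈ C p := (memC p q).mpr (conn_symm hcpq)
      have hmem := mem_fmap.mp hx (C p)
        (Finset.mem_image.mpr ⟨p, Finset.mem_univ p, rfl⟩) p (selfC p) q hsB
      have h2 := key1 hcpq
      have h3 : x₀ p - x₀ q = (a : ℝ) := hx₀' _ hH
      show x p - x q = (a : ℝ)
      linarith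
  have hblkne : ∀ B ∈ π, B.Nonempty := by
    rintro B hB
    obtain ⟨i, -, rfl⟩ := Finset.mem_image.mp hB
    exact ⟨i, selfC i⟩
  have hdisj : (↑π : Set (Finset (Fin n))).PairwiseDisjoint id := by
    intro B1 h1 B2 h2 hne12
    obtain ⟨i, -, rfl⟩ := Finset.mem_image.mp (Finset.mem_coe.mp h1)
    obtain ⟨j, -, rfl⟩ := Finset.mem_image.mp (Finset.mem_coe.mp h2)
    rw [Function.onFun, id, id, Finset.disjoint_left]
    intro u hu1 hu2
    exact hne12 (((Ceq ((memC i u).mp hu1)).symm).trans (Ceq ((memC j u).mp hu2)))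
  have hcov : ∀ v : Fin n, ∃ B ∈ π, v ∈ B := by
    intro v
    exact ⟨C v, Finset.mem_image.mpr ⟨v, Finset.mem_univ v, rfl⟩, selfC v⟩
  have hcard : π.card = k := by
    rw [← flatDim_fmap h hblkne hdisj hcov, ← hFfmap]
    exact hdim
  have hcat : ∀ B ∈ π, CatalanBlockCond m h B := by
    rintro B hB
    obtain ⟨i0, -, rfl⟩ := Finset.mem_image.mp hB
    constructor
    · refine ⟨wx i0, Finset.mem_coe.mpr (hwx1 i0), ?_⟩
      have h1 := hcast (wx i0)
      have h2 : wx (wx i0) = wx i0 := wxeq ((memC i0 (wx i0)).mp (hwx1 i0))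
      have h3 : ((h (wx i0) : ℝ)) = 0 := by rw [h1, h2]; ring
      exact_mod_cast h3
    · intro a ha hlt
      obtain ⟨u, hu, rfl⟩ := ha
      have hu' : u ∈ C i0 := hu
      have hfin : (h '' (↑(C i0) : Set (Fin n))).Finite := (C i0).finite_toSet.image h
      have hnonemp : (h '' ((C i0 : Finset (Fin n)) : Set (Fin n))).Nonempty :=
        ⟨h u, Set.mem_image_of_mem h hu⟩
      obtain ⟨v, hv, hveq⟩ := Set.Nonempty.csSup_mem hnonemp hfin
      rw [← hveq] at hlt
      have hvC : v ∈ C i0 := hv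
      have hwu : wx u = wx i0 := wxeq ((memC i0 u).mp hu')
      have hwv : wx v = wx i0 := wxeq ((memC i0 v).mp hvC)
      have hcu := hcast u
      have hcv := hcast v
      rw [hwu] at hcu
      rw [hwv] at hcv
      have hxvu : x₀ v < x₀ u := by
        have hlt' : (h u : ℝ) < (h v : ℝ) := by exact_mod_cast hlt
        linarith
      set S := (C i0).filter (fun w => x₀ w < x₀ u) with hS
      obtain ⟨w, hwS, hwmax⟩ := S.exists_max_image x₀ ⟨v, Finset.mem_filter.mpr ⟨hvC, hxvu⟩⟩
      have hwC : w ∈ C i0 := (Finset.mem_filter.mp hwS).1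
      have hwlt : x₀ w < x₀ u := (Finset.mem_filter.mp hwS).2
      have hgap : x₀ u - x₀ w ≤ (m : ℝ) := by
        by_contra hgt
        push_neg at hgt
        have key : ∀ p q, conn m Bs p q → conn m Bs p i0 → (x₀ p ≤ x₀ w ↔ x₀ q ≤ x₀ w) := by
          intro p q hpq
          induction hpq with
          | rel p q hr =>
            intro hpi
            have hconnpq : conn m Bs p q := Relation.EqvGen.rel _ _ hr
            have hqi : conn m Bs q i0 := conn_trans (conn_symm hconnpq) hpi
            have hb := erel_diff hr hx₀' hx₀'
            constructor
            · intro hp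
              refine hwmax q (Finset.mem_filter.mpr ⟨(memC i0 q).mpr hqi, ?_⟩)
              have := hb.2.2
              linarith
            · intro hq
              refine hwmax p (Finset.mem_filter.mpr ⟨(memC i0 p).mpr hpi, ?_⟩)
              have := hb.2.1
              linarith
          | refl p => exact fun _ => Iff.rfl
          | symm p q hpq ih =>
            intro hqi
            exact (ih (conn_trans hpq hqi)).symm
          | trans p q r h1 h2 ih1 ih2 =>
            intro hpi
            exact (ih1 hpi).trans (ih2 (conn_trans (conn_symm h1) hpi))
        have hcwu : conn m Bs w u :=
          conn_trans ((memC i0 w).mp hwC) (conn_symm ((memC i0 u).mp hu'))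
        have := (key w u hcwu ((memC i0 w).mp hwC)).mp le_rfl
        linarith
      have hww : wx w = wx i0 := wxeq ((memC i0 w).mp hwC)
      have hcw := hcast w
      rw [hww] at hcw
      refine ⟨h w, ⟨w, Finset.mem_coe.mpr hwC, rfl⟩, ?_, ?_⟩
      · have : (h u : ℝ) < (h w : ℝ) := by linarith
        exact_mod_cast this
      · have : (h w : ℝ) ≤ (h u : ℝ) + (m : ℝ) := by linarith
        exact_mod_cast this
  exact ⟨(π, h), ⟨⟨hcard, hblkne, hdisj, hcov⟩, hcat⟩, hFfmap.symm⟩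

end CFB

/-- The map `(π, h) ↦ ⋂_{B ∈ π} {x | x i + h i = x j + h j for all i, j ∈ B}` is a
bijection from the pairs of a partition of `{1,…,n}` into `k` blocks and a function `h`
satisfying the Catalan condition on each block, onto the `k`-dimensional flats
of `C^m_n`. -/
theorem catalan_flats_bij (m n k : ℕ) (hn : 1 ≤ n) (hk : 1 ≤ k) :
    Set.BijOn
      (fun p : Finset (Finset (Fin n)) × (Fin n → ℕ) =>
        ⋂ B ∈ p.1, {x : Fin n → ℝ |
          ∀ i ∈ B, ∀ j ∈ B, x i + (p.2 i : ℝ) = x j + (p.2 j : ℝ)})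
      {p : Finset (Finset (Fin n)) × (Fin n → ℕ) |
        IsPartitionInto p.1 k ∧ ∀ B ∈ p.1, CatalanBlockCond m p.2 B}
      (Lk (CatalanArr m n) k) := by
  classical
  refine ⟨?_, ?_, ?_⟩
  · rintro ⟨π, h⟩ hp
    obtain ⟨hpart, hcat⟩ := hp
    obtain ⟨hcard, hblkne, hdisj, hcov⟩ := hpart
    refine ⟨CFB.fmap_mem_flats hcat, ?_⟩
    show flatDim (CFB.fmap π h) = k
    rw [CFB.flatDim_fmap h hblkne hdisj hcov]
    exact hcard
  · rintro ⟨π, h⟩ hp ⟨σ, g⟩ hq heq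
    obtain ⟨⟨hcard1, hne1, hdisj1, hcov1⟩, hcat1⟩ := hp
    obtain ⟨⟨hcard2, hne2, hdisj2, hcov2⟩, hcat2⟩ := hq
    have heq' : CFB.fmap π h = CFB.fmap σ g := heq
    have hxg : (fun t => -(g t : ℝ)) ∈ CFB.fmap σ g :=
      CFB.mem_fmap.mpr (by intro B _ i _ j _; ring)
    have hxh : (fun t => -(h t : ℝ)) ∈ CFB.fmap π h :=
      CFB.mem_fmap.mpr (by intro B _ i _ j _; ring)
    have hxgπ : (fun t => -(g t : ℝ)) ∈ CFB.fmap π h := heq'.symm ▸ hxg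
    have hxhσ : (fun t => -(h t : ℝ)) ∈ CFB.fmap σ g := heq' ▸ hxh
    have hrel : ∀ i j, CFB.sameB π i j → CFB.sameB σ i j := by
      intro i j hij
      by_contra hns
      obtain ⟨B0, hB0, hi0⟩ := hcov2 i
      have hj0 : j ∉ B0 := fun hj => hns ⟨B0, hB0, hi0, hj⟩
      have hy : (fun t => -(g t : ℝ) + (if t ∈ B0 then (1:ℝ) else 0)) ∈ CFB.fmap σ g := by
        rw [CFB.mem_fmap]
        intro B hB p hp q hq
        show -(g p : ℝ) + (if p ∈ B0 then (1:ℝ) else 0) + (g p : ℝ) =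
          -(g q : ℝ) + (if q ∈ B0 then (1:ℝ) else 0) + (g q : ℝ)
        by_cases hBB : B = B0
        · subst hBB
          rw [if_pos hp, if_pos hq]
          ring
        · have hp0 : p ∉ B0 := fun hmem => hBB (CFB.block_eq hdisj2 hB hB0 hp hmem)
          have hq0 : q ∉ B0 := fun hmem => hBB (CFB.block_eq hdisj2 hB hB0 hq hmem)
          rw [if_neg hp0, if_neg hq0]
          ring
      have hyπ : (fun t => -(g t : ℝ) + (if t ∈ B0 then (1:ℝ) else 0)) ∈ CFB.fmap π h :=
        heq'.symm ▸ hy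
      have e1' : -(g i : ℝ) + (h i : ℝ) = -(g j : ℝ) + (h j : ℝ) :=
        CFB.mem_fmap'.mp hxgπ i j hij
      have e2' : -(g i : ℝ) + (if i ∈ B0 then (1:ℝ) else 0) + (h i : ℝ) =
          -(g j : ℝ) + (if j ∈ B0 then (1:ℝ) else 0) + (h j : ℝ) :=
        CFB.mem_fmap'.mp hyπ i j hij
      rw [if_pos hi0, if_neg hj0] at e2'
      linarith
    have hrel2 : ∀ i j, CFB.sameB σ i j → CFB.sameB π i j := by
      intro i j hij
      by_contra hns
      obtain ⟨B0, hB0, hi0⟩ := hcov1 i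
      have hj0 : j ∉ B0 := fun hj => hns ⟨B0, hB0, hi0, hj⟩
      have hy : (fun t => -(h t : ℝ) + (if t ∈ B0 then (1:ℝ) else 0)) ∈ CFB.fmap π h := by
        rw [CFB.mem_fmap]
        intro B hB p hp q hq
        show -(h p : ℝ) + (if p ∈ B0 then (1:ℝ) else 0) + (h p : ℝ) =
          -(h q : ℝ) + (if q ∈ B0 then (1:ℝ) else 0) + (h q : ℝ)
        by_cases hBB : B = B0
        · subst hBB
          rw [if_pos hp, if_pos hq]
          ring
        · have hp0 : p ∉ B0 := fun hmem => hBB (CFB.block_eq hdisj1 hB hB0 hp hmem)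
          have hq0 : q ∉ B0 := fun hmem => hBB (CFB.block_eq hdisj1 hB hB0 hq hmem)
          rw [if_neg hp0, if_neg hq0]
          ring
      have hyσ : (fun t => -(h t : ℝ) + (if t ∈ B0 then (1:ℝ) else 0)) ∈ CFB.fmap σ g :=
        heq' ▸ hy
      have e1' : -(h i : ℝ) + (g i : ℝ) = -(h j : ℝ) + (g j : ℝ) :=
        CFB.mem_fmap'.mp hxhσ i j hij
      have e2' : -(h i : ℝ) + (if i ∈ B0 then (1:ℝ) else 0) + (g i : ℝ) =
          -(h j : ℝ) + (if j ∈ B0 then (1:ℝ) else 0) + (g j : ℝ) :=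
        CFB.mem_fmap'.mp hyσ i j hij
      rw [if_pos hi0, if_neg hj0] at e2'
      linarith
    have hπσ : π = σ :=
      Finset.Subset.antisymm
        (CFB.subset_of_sameB hne1 hdisj1 hdisj2 hcov2 hrel hrel2)
        (CFB.subset_of_sameB hne2 hdisj2 hdisj1 hcov1 hrel2 hrel)
    subst hπσ
    have hfg : h = g := by
      funext i
      obtain ⟨B, hB, hi⟩ := hcov1 i
      obtain ⟨j0, hj0B, hj00⟩ := (hcat1 B hB).1
      obtain ⟨j1, hj1B, hj10⟩ := (hcat2 B hB).1
      have d1 : -(g i : ℝ) + (h i : ℝ) = -(g j0 : ℝ) + (h j0 : ℝ) :=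
        CFB.mem_fmap'.mp hxgπ i j0 ⟨B, hB, hi, hj0B⟩
      have d2 : -(g i : ℝ) + (h i : ℝ) = -(g j1 : ℝ) + (h j1 : ℝ) :=
        CFB.mem_fmap'.mp hxgπ i j1 ⟨B, hB, hi, hj1B⟩
      have c0 : (h j0 : ℝ) = 0 := by exact_mod_cast hj00
      have c1 : (g j1 : ℝ) = 0 := by exact_mod_cast hj10
      have n0 : (0:ℝ) ≤ (g j0 : ℝ) := Nat.cast_nonneg _
      have n1 : (0:ℝ) ≤ (h j1 : ℝ) := Nat.cast_nonneg _
      have : (h i : ℝ) = (g i : ℝ) := by linarith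
      exact_mod_cast this
    rw [Prod.mk.injEq]
    exact ⟨rfl, hfg⟩
  · intro F hF
    obtain ⟨p, hp, hpF⟩ := CFB.surj_aux m k hn hF
    exact ⟨p, hp, hpF⟩
end

section
/- Fix integers m ≥ 1, n ≥ 1 and k ≥ 1. Consider pairs (π, h) where π is a set partition of {1, …, n} into k nonempty blocks and h : {1, …, n} → ℕ is a function such that every block B of π satisfies: 0 ∈ h(B), and for every a ∈ h(B) with a < max h(B), letting b be the smallest element of h(B) greater than a, one has b ≤ a + m, and if b = a + m then min{i ∈ B : h(i) = a} < max{j ∈ B : h(j) = b}. Then the map sending (π, h) to the affine subspace ⋂_{B ∈ π} {x ∈ ℝ^n : x_i + h(i) = x_j + h(j) for all i, j ∈ B} is a bijection from the set of such pairs onto the set L_k(S^m_n) of k-dimensional flats of the extended Shi arrangement S^m_n. -/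
open Set

/-- The Shi condition on a block `B`: `0 ∈ h(B)`, and for every `a ∈ h(B)` below
`max h(B)`, the least element `b` of `h(B)` greater than `a` satisfies `b ≤ a + m`,
and whenever `b = a + m` the smallest index in `B` attaining `a` is smaller than the
largest index in `B` attaining `b`. -/
def ShiBlockCond (m : ℕ) {n : ℕ} (h : Fin n → ℕ) (B : Finset (Fin n)) : Prop :=
  0 ∈ h '' ↑B ∧
    ∀ a ∈ h '' ↑B, a < sSup (h '' ↑B) →
      ∀ b, b = sInf {c ∈ h '' ↑B | a < c} →
        b ≤ a + m ∧
          (b = a + m →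
            sInf (Fin.val '' {i | i ∈ B ∧ h i = a}) <
              sSup (Fin.val '' {j | j ∈ B ∧ h j = b}))

def Sset {n : ℕ} (π : Finset (Finset (Fin n))) (h : Fin n → ℕ) : Set (Fin n → ℝ) :=
  ⋂ B ∈ π, {x : Fin n → ℝ | ∀ i ∈ B, ∀ j ∈ B, x i + (h i : ℝ) = x j + (h j : ℝ)}

lemma mem_Sset {n : ℕ} {π : Finset (Finset (Fin n))} {h : Fin n → ℕ} {x : Fin n → ℝ} :
    x ∈ Sset π h ↔ ∀ B ∈ π, ∀ i ∈ B, ∀ j ∈ B, x i + (h i : ℝ) = x j + (h j : ℝ) := by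
  simp [Sset]

lemma block_unique {n : ℕ} {π : Finset (Finset (Fin n))}
    (hdisj : (↑π : Set (Finset (Fin n))).PairwiseDisjoint id)
    {B C : Finset (Fin n)} (hB : B ∈ π) (hC : C ∈ π) {i : Fin n}
    (hiB : i ∈ B) (hiC : i ∈ C) : B = C := by
  by_contra hne
  exact (Finset.disjoint_left.mp (hdisj (Finset.mem_coe.mpr hB) (Finset.mem_coe.mpr hC) hne)) hiB hiC

lemma dim_Sset {n : ℕ} {π : Finset (Finset (Fin n))} (h : Fin n → ℕ)
    (hne : ∀ B ∈ π, B.Nonempty)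
    (hdisj : (↑π : Set (Finset (Fin n))).PairwiseDisjoint id)
    (hcov : ∀ v : Fin n, ∃ B ∈ π, v ∈ B) :
    flatDim (Sset π h) = π.card := by
  classical
  set blk : Fin n → {B // B ∈ π} := fun i => ⟨(hcov i).choose, (hcov i).choose_spec.1⟩ with hblk
  have hmemblk : ∀ i : Fin n, i ∈ (blk i).1 := fun i => (hcov i).choose_spec.2
  have hblk_eq : ∀ {i : Fin n} {B : Finset (Fin n)}, B ∈ π → i ∈ B → (blk i).1 = B := by
    intro i B hB hiB
    exact block_unique hdisj (blk i).2 hB (hmemblk i) hiB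
  set Ψ : ({B // B ∈ π} → ℝ) →ₗ[ℝ] (Fin n → ℝ) := LinearMap.funLeft ℝ ℝ blk with hΨ
  have hblk_surj : Function.Surjective blk := by
    rintro ⟨B, hB⟩
    obtain ⟨i, hi⟩ := hne B hB
    exact ⟨i, Subtype.ext (hblk_eq hB hi)⟩
  have hΨinj : Function.Injective Ψ := LinearMap.funLeft_injective_of_surjective ℝ ℝ blk hblk_surj
  set W : Submodule ℝ (Fin n → ℝ) := LinearMap.range Ψ with hW
  have hSeq : Sset π h = ↑(AffineSubspace.mk' (fun i => -(h i : ℝ)) W) := by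
    ext x
    rw [SetLike.mem_coe, AffineSubspace.mem_mk', mem_Sset]
    constructor
    · intro hx
      refine ⟨fun B => x (hne B.1 B.2).choose + (h (hne B.1 B.2).choose : ℝ), funext fun i => ?_⟩
      have h1 : (hne (blk i).1 (blk i).2).choose ∈ (blk i).1 := (hne (blk i).1 (blk i).2).choose_spec
      have := hx (blk i).1 (blk i).2 _ h1 i (hmemblk i)
      simpa [Ψ, LinearMap.funLeft, vsub_eq_sub] using this
    · rintro ⟨f, hf⟩
      intro B hB i hi j hj
      have hfi : f (blk i) = x i + (h i : ℝ) := by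
        have := congrFun hf i
        simp [Ψ, LinearMap.funLeft, vsub_eq_sub] at this
        linarith [this]
      have hfj : f (blk j) = x j + (h j : ℝ) := by
        have := congrFun hf j
        simp [Ψ, LinearMap.funLeft, vsub_eq_sub] at this
        linarith [this]
      have : blk i = blk j := Subtype.ext ((hblk_eq hB hi).trans (hblk_eq hB hj).symm)
      rw [← hfi, this, hfj]
  rw [flatDim, hSeq, AffineSubspace.affineSpan_coe, AffineSubspace.direction_mk', hW,
    LinearMap.finrank_range_of_inj hΨinj, Module.finrank_fintype_fun_eq_card, Fintype.card_coe]

lemma neg_mem_Sset {n : ℕ} {π : Finset (Finset (Fin n))} {h : Fin n → ℕ} :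
    (fun i => -(h i : ℝ)) ∈ Sset π h := by
  rw [mem_Sset]; intro B _ i _ j _; ring

lemma ind_mem_Sset {n : ℕ} {π : Finset (Finset (Fin n))} {h : Fin n → ℕ}
    (hdisj : (↑π : Set (Finset (Fin n))).PairwiseDisjoint id)
    {B : Finset (Fin n)} (hB : B ∈ π) :
    (fun i => -(h i : ℝ) + (if i ∈ B then (1:ℝ) else 0)) ∈ Sset π h := by
  rw [mem_Sset]
  intro C hC i hi j hj
  have : (if i ∈ B then (1:ℝ) else 0) = (if j ∈ B then (1:ℝ) else 0) := by
    by_cases hiB : i ∈ B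
    · rw [block_unique hdisj hC hB hi hiB] at hj
      simp [hiB, hj]
    · have hjB : j ∉ B := fun hjB => hiB (by rw [block_unique hdisj hC hB hj hjB] at hi; exact hi)
      simp [hiB, hjB]
  push_cast
  linarith [this]

def sameBlock {n : ℕ} (π : Finset (Finset (Fin n))) (i j : Fin n) : Prop :=
  ∃ B ∈ π, i ∈ B ∧ j ∈ B

lemma diff_const_of_sameBlock {n : ℕ} {π : Finset (Finset (Fin n))} {h : Fin n → ℕ}
    {i j : Fin n} (hs : sameBlock π i j) {x : Fin n → ℝ} (hx : x ∈ Sset π h) :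
    x i - x j = (h j : ℝ) - (h i : ℝ) := by
  obtain ⟨B, hB, hi, hj⟩ := hs
  have := mem_Sset.mp hx B hB i hi j hj
  linarith

lemma sameBlock_iff_of_eq {n : ℕ} {π π' : Finset (Finset (Fin n))} {h h' : Fin n → ℕ}
    (hdisj : (↑π : Set (Finset (Fin n))).PairwiseDisjoint id)
    (hcov : ∀ v : Fin n, ∃ B ∈ π, v ∈ B)
    (heq : Sset π h = Sset π' h') {i j : Fin n}
    (hs : sameBlock π' i j) : sameBlock π i j := by
  by_contra hns
  obtain ⟨B, hB, hiB⟩ := hcov i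
  have hjB : j ∉ B := fun hjB => hns ⟨B, hB, hiB, hjB⟩
  have h1 := diff_const_of_sameBlock (h := h') hs (heq ▸ neg_mem_Sset (π := π) (h := h))
  have h2 := diff_const_of_sameBlock (h := h') hs (heq ▸ ind_mem_Sset (h := h) hdisj hB)
  simp only [hiB, hjB, if_true, if_false] at h2
  linarith

lemma Sset_injective {n m : ℕ} {π π' : Finset (Finset (Fin n))} {h h' : Fin n → ℕ}
    (hne : ∀ B ∈ π, B.Nonempty)
    (hdisj : (↑π : Set (Finset (Fin n))).PairwiseDisjoint id)
    (hcov : ∀ v : Fin n, ∃ B ∈ π, v ∈ B)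
    (hne' : ∀ B ∈ π', B.Nonempty)
    (hdisj' : (↑π' : Set (Finset (Fin n))).PairwiseDisjoint id)
    (hcov' : ∀ v : Fin n, ∃ B ∈ π', v ∈ B)
    (hz : ∀ B ∈ π, 0 ∈ h '' ↑B) (hz' : ∀ B ∈ π', 0 ∈ h' '' ↑B)
    (heq : Sset π h = Sset π' h') : π = π' ∧ h = h' := by
  have hiff : ∀ i j, sameBlock π i j ↔ sameBlock π' i j := fun i j =>
    ⟨sameBlock_iff_of_eq hdisj' hcov' heq.symm, sameBlock_iff_of_eq hdisj hcov heq⟩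
  have hππ' : ∀ (σ σ' : Finset (Finset (Fin n))),
      (∀ B ∈ σ, B.Nonempty) → (↑σ : Set (Finset (Fin n))).PairwiseDisjoint id →
      (↑σ' : Set (Finset (Fin n))).PairwiseDisjoint id →
      (∀ v : Fin n, ∃ B ∈ σ', v ∈ B) →
      (∀ i j, sameBlock σ i j ↔ sameBlock σ' i j) → ∀ B ∈ σ, B ∈ σ' := by
    intro σ σ' hne hdisj hdisj' hcov' hiff B hB
    obtain ⟨i, hi⟩ := hne B hB
    obtain ⟨C, hC, hiC⟩ := hcov' i
    have : B = C := by
      ext j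
      constructor
      · intro hj
        obtain ⟨D, hD, hiD, hjD⟩ := (hiff i j).mp ⟨B, hB, hi, hj⟩
        rwa [block_unique hdisj' hC hD hiC hiD]
      · intro hj
        obtain ⟨D, hD, hiD, hjD⟩ := (hiff i j).mpr ⟨C, hC, hiC, hj⟩
        rwa [block_unique hdisj hB hD hi hiD]
    rwa [this]
  have hππ : π = π' := by
    apply Finset.Subset.antisymm
    · exact fun B hB => hππ' π π' hne hdisj hdisj' hcov' hiff B hB
    · exact fun B hB => hππ' π' π hne' hdisj' hdisj hcov (fun i j => (hiff i j).symm) B hB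
  refine ⟨hππ, funext fun i => ?_⟩
  obtain ⟨B, hB, hiB⟩ := hcov i
  have hB' : B ∈ π' := hππ ▸ hB
  have hv : (fun i => -(h' i : ℝ)) ∈ Sset π h := heq ▸ neg_mem_Sset
  have hconst : ∀ j ∈ B, -(h' j : ℝ) + h j = -(h' i : ℝ) + h i :=
    fun j hj => mem_Sset.mp hv B hB j hj i hiB
  obtain ⟨i0, hi0B, hi0⟩ := hz B hB
  obtain ⟨i1, hi1B, hi1⟩ := hz' B hB'
  have e0 := hconst i0 (by simpa using hi0B)
  have e1 := hconst i1 (by simpa using hi1B)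
  rw [hi0] at e0
  rw [hi1] at e1
  have : (h i : ℝ) = h' i := by
    push_cast at e0 e1 ⊢
    have h0 : (0:ℝ) ≤ h' i0 := by positivity
    have h1 : (0:ℝ) ≤ h i1 := by positivity
    linarith
  exact_mod_cast this

lemma step {m n : ℕ} (hm : 1 ≤ m) {π : Finset (Finset (Fin n))} {h : Fin n → ℕ}
    {B : Finset (Fin n)} (hB : B ∈ π) {p q : Fin n} (hp : p ∈ B) (hq : q ∈ B)
    (hhigh : (h q : ℤ) - h p ≤ m) (hlow : (h p : ℤ) - h q ≤ m)
    (horder : (h q : ℤ) - h p = m → p < q) (horder' : (h p : ℤ) - h q = m → q < p)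
    {x : Fin n → ℝ} (hx : x ∈ ⋂₀ {H | H ∈ ShiArr m n ∧ Sset π h ⊆ H}) :
    x p + (h p : ℝ) = x q + (h q : ℝ) := by
  have key : ∀ u v : Fin n, u ∈ B → v ∈ B → u < v → (1 : ℤ) - m ≤ (h v : ℤ) - h u →
      (h v : ℤ) - h u ≤ m → x u + (h u : ℝ) = x v + (h v : ℝ) := by
    intro u v hu hv huv h1 h2
    have hmem : hyp n u v ((h v : ℤ) - h u) ∈ ShiArr m n := ⟨u, v, _, h1, h2, huv, rfl⟩
    have hsub : Sset π h ⊆ hyp n u v ((h v : ℤ) - h u) := by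
      intro y hy
      have := (mem_Sset.mp hy) B hB u hu v hv
      show y u - y v = _
      push_cast
      linarith
    have := hx _ ⟨hmem, hsub⟩
    have h3 : x u - x v = (((h v : ℤ) - h u : ℤ) : ℝ) := this
    push_cast at h3
    linarith
  rcases lt_trichotomy p q with hlt | heq | hgt
  · have h1 : (1 : ℤ) - m ≤ (h q : ℤ) - h p := by
      rcases eq_or_lt_of_le hlow with he | hl
      · exact absurd (horder' he) (by omega)
      · omega
    exact key p q hp hq hlt h1 hhigh
  · rw [heq]
  · have h1 : (1 : ℤ) - m ≤ (h p : ℤ) - h q := by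
      rcases eq_or_lt_of_le hhigh with he | hl
      · exact absurd (horder he) (by omega)
      · omega
    exact (key q p hq hp hgt h1 hlow).symm

lemma chain {m n : ℕ} (hm : 1 ≤ m) {π : Finset (Finset (Fin n))} {h : Fin n → ℕ}
    {B : Finset (Fin n)} (hB : B ∈ π) (hcond : ShiBlockCond m h B) :
    ∀ N : ℕ, ∀ p q : Fin n, p ∈ B → q ∈ B → h p ≤ h q → h q - h p ≤ N →
      ∀ x ∈ ⋂₀ {H | H ∈ ShiArr m n ∧ Sset π h ⊆ H},
        x p + (h p : ℝ) = x q + (h q : ℝ) := by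
  intro N
  induction N with
  | zero =>
    intro p q hp hq hle hN x hx
    have : h p = h q := by omega
    exact step hm hB hp hq (by omega) (by omega) (by omega) (by omega) hx
  | succ N ih =>
    intro p q hp hq hle hN x hx
    rcases eq_or_lt_of_le hle with heq | hlt
    · exact step hm hB hp hq (by omega) (by omega) (by omega) (by omega) hx
    · set a := h p with ha
      have haB : a ∈ h '' ↑B := ⟨p, by simpa using hp, rfl⟩
      have hqB : h q ∈ h '' ↑B := ⟨q, by simpa using hq, rfl⟩
      have hfin : (h '' ↑B).Finite := (B.finite_toSet).image h
      have hsup : a < sSup (h '' ↑B) :=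
        lt_of_lt_of_le hlt (le_csSup hfin.bddAbove hqB)
      set b := sInf {c ∈ h '' ↑B | a < c} with hb
      obtain ⟨hble, hidx⟩ := hcond.2 a haB hsup b rfl
      have hSne : {c ∈ h '' ↑B | a < c}.Nonempty := ⟨h q, hqB, hlt⟩
      have hbmem : b ∈ {c ∈ h '' ↑B | a < c} := Nat.sInf_mem hSne
      have hbq : b ≤ h q := Nat.sInf_le ⟨hqB, hlt⟩
      have hab : a < b := hbmem.2
      obtain ⟨r, hrB, hr⟩ := hbmem.1
      have hrB' : r ∈ B := by simpa using hrB
      rcases eq_or_lt_of_le hble with hbeq | hblt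
      · -- b = a + m : use the index condition
        have hidx' := hidx hbeq
        set SA := Fin.val '' {i | i ∈ B ∧ h i = a} with hSA
        set SB := Fin.val '' {j | j ∈ B ∧ h j = b} with hSB
        have hSAne : SA.Nonempty := ⟨p.val, p, ⟨hp, rfl⟩, rfl⟩
        have hSBne : SB.Nonempty := ⟨r.val, r, ⟨hrB', hr⟩, rfl⟩
        have hSBfin : SB.Finite := (Set.finite_Icc 0 n).subset (by
          rintro _ ⟨j, _, rfl⟩; exact ⟨Nat.zero_le _, j.2.le⟩)
        have hinf : sInf SA ∈ SA := Nat.sInf_mem hSAne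
        have hsupmem : sSup SB ∈ SB := hSBne.csSup_mem hSBfin
        obtain ⟨p0, ⟨hp0B, hp0a⟩, hp0v⟩ := hinf
        obtain ⟨q0, ⟨hq0B, hq0b⟩, hq0v⟩ := hsupmem
        have hp0q0 : p0 < q0 := by
          rw [Fin.lt_def, hp0v, hq0v]; exact hidx'
        have e1 : x p + (a : ℝ) = x p0 + (h p0 : ℝ) :=
          step hm hB hp hp0B (by omega) (by omega) (by omega) (by omega) hx
        have e2 : x p0 + (h p0 : ℝ) = x q0 + (h q0 : ℝ) :=
          step hm hB hp0B hq0B (by omega) (by omega) (fun _ => hp0q0) (by omega) hx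
        have e3 : x q0 + (h q0 : ℝ) = x q + (h q : ℝ) := by
          apply ih q0 q hq0B hq (by omega) (by omega) x hx
        rw [e1, e2, e3]
      · -- b < a + m : link to r directly
        have e1 : x p + (a : ℝ) = x r + (h r : ℝ) :=
          step hm hB hp hrB' (by omega) (by omega) (by omega) (by omega) hx
        have e2 : x r + (h r : ℝ) = x q + (h q : ℝ) :=
          ih r q hrB' hq (by omega) (by omega) x hx
        rw [e1, e2]

lemma Sset_eq_sInter {m n : ℕ} (hm : 1 ≤ m) {π : Finset (Finset (Fin n))} {h : Fin n → ℕ}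
    (hcond : ∀ B ∈ π, ShiBlockCond m h B) :
    Sset π h = ⋂₀ {H | H ∈ ShiArr m n ∧ Sset π h ⊆ H} := by
  apply Set.Subset.antisymm
  · intro x hx H hH
    exact hH.2 hx
  · intro x hx
    rw [mem_Sset]
    intro B hB i hi j hj
    rcases le_total (h i) (h j) with hle | hle
    · exact chain hm hB (hcond B hB) (h j - h i) i j hi hj hle le_rfl x hx
    · exact (chain hm hB (hcond B hB) (h i - h j) j i hj hi hle le_rfl x hx).symm

lemma Sset_mem_flats {m n : ℕ} (hm : 1 ≤ m) {π : Finset (Finset (Fin n))} {h : Fin n → ℕ}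
    (hcond : ∀ B ∈ π, ShiBlockCond m h B) :
    Sset π h ∈ flats (ShiArr m n) :=
  ⟨⟨_, neg_mem_Sset⟩, {H | H ∈ ShiArr m n ∧ Sset π h ⊆ H}, fun H hH => hH.1,
    Sset_eq_sInter hm hcond⟩

lemma surj_aux {m n : ℕ} (hm : 1 ≤ m) {F : Set (Fin n → ℝ)} (hFne : F.Nonempty)
    {Bs : Set (Set (Fin n → ℝ))} (hBsub : Bs ⊆ ShiArr m n) (hFeq : F = ⋂₀ Bs) :
    ∃ (π : Finset (Finset (Fin n))) (h : Fin n → ℕ),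
      (∀ B ∈ π, B.Nonempty) ∧ (↑π : Set (Finset (Fin n))).PairwiseDisjoint id ∧
      (∀ v : Fin n, ∃ B ∈ π, v ∈ B) ∧
      (∀ B ∈ π, ShiBlockCond m h B) ∧ Sset π h = F := by
  classical
  obtain ⟨x0, hx0⟩ := hFne
  set r : Fin n → Fin n → Prop := fun i j => ∃ a : ℤ, ∀ x ∈ F, x i - x j = (a : ℝ) with hr
  have rrefl : ∀ i, r i i := fun i => ⟨0, fun x _ => by simp⟩
  have rsymm : ∀ {i j}, r i j → r j i := by
    rintro i j ⟨a, ha⟩; exact ⟨-a, fun x hx => by push_cast; linarith [ha x hx]⟩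
  have rtrans : ∀ {i j l}, r i j → r j l → r i l := by
    rintro i j l ⟨a, ha⟩ ⟨b, hb⟩
    exact ⟨a + b, fun x hx => by push_cast; linarith [ha x hx, hb x hx]⟩
  have hconst : ∀ {i j}, r i j → ∀ x ∈ F, x i - x j = x0 i - x0 j := by
    rintro i j ⟨a, ha⟩ x hx
    rw [ha x hx, ha x0 hx0]
  set cls : Fin n → Finset (Fin n) := fun i => Finset.univ.filter (fun j => r i j) with hcls
  have mem_cls : ∀ {i j}, j ∈ cls i ↔ r i j := by
    intro i j; simp [hcls]
  have self_mem_cls : ∀ i, i ∈ cls i := fun i => mem_cls.mpr (rrefl i)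
  have cls_eq : ∀ {i j}, r i j → cls i = cls j := by
    intro i j hij
    ext l
    simp only [mem_cls]
    exact ⟨fun h => rtrans (rsymm hij) h, fun h => rtrans hij h⟩
  set π : Finset (Finset (Fin n)) := Finset.image cls Finset.univ with hπ
  have hπne : ∀ B ∈ π, B.Nonempty := by
    intro B hB
    obtain ⟨i, _, rfl⟩ := Finset.mem_image.mp hB
    exact ⟨i, self_mem_cls i⟩
  have hπdisj : (↑π : Set (Finset (Fin n))).PairwiseDisjoint id := by
    intro B hB C hC hne
    obtain ⟨i, _, rfl⟩ := Finset.mem_image.mp (Finset.mem_coe.mp hB)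
    obtain ⟨j, _, rfl⟩ := Finset.mem_image.mp (Finset.mem_coe.mp hC)
    simp only [Function.onFun, id_eq]
    rw [Finset.disjoint_left]
    intro p hpi hpj
    exact hne (by rw [cls_eq (mem_cls.mp hpi), ← cls_eq (mem_cls.mp hpj)])
  have hπcov : ∀ v : Fin n, ∃ B ∈ π, v ∈ B := fun v =>
    ⟨cls v, Finset.mem_image.mpr ⟨v, Finset.mem_univ v, rfl⟩, self_mem_cls v⟩
  -- the height function
  have clsne : ∀ i, ((cls i).image x0).Nonempty :=
    fun i => ⟨x0 i, Finset.mem_image.mpr ⟨i, self_mem_cls i, rfl⟩⟩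
  set M : Fin n → ℝ := fun i => ((cls i).image x0).max' (clsne i) with hM
  set h : Fin n → ℕ := fun i => (⌊M i - x0 i⌋).toNat with hh
  have hcast : ∀ i, (h i : ℝ) = M i - x0 i := by
    intro i
    obtain ⟨jm, hjm, hjmx⟩ := Finset.mem_image.mp (((cls i).image x0).max'_mem (clsne i))
    obtain ⟨a, ha⟩ := mem_cls.mp hjm
    have h1 : x0 i - x0 jm = (a : ℝ) := ha x0 hx0
    have hMi : M i = ((cls i).image x0).max' (clsne i) := rfl
    have h2 : M i - x0 i = ((-a : ℤ) : ℝ) := by rw [hMi, ← hjmx]; push_cast; linarith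
    have h3 : x0 i ≤ M i := Finset.le_max' _ _ (Finset.mem_image.mpr ⟨i, self_mem_cls i, rfl⟩)
    have h4 : (0:ℝ) ≤ ((-a : ℤ) : ℝ) := by linarith
    have h5 : (0:ℤ) ≤ -a := by exact_mod_cast h4
    have h6 : (h i : ℕ) = (-a).toNat := by rw [hh]; simp only [h2, Int.floor_intCast]
    rw [h6, h2]
    norm_cast
    omega
  have hMeq : ∀ {i j}, r i j → M i = M j := by
    intro i j hij
    have hc := cls_eq hij
    simp only [hM]
    congr 1
    rw [hc]
  have key : ∀ {i j}, r i j → x0 i + (h i : ℝ) = x0 j + (h j : ℝ) := by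
    intro i j hij
    rw [hcast i, hcast j, hMeq hij]; ring
  -- B-membership gives r
  have hrB : ∀ {B : Finset (Fin n)}, B ∈ π → ∀ {i j}, i ∈ B → j ∈ B → r i j := by
    intro B hB i j hi hj
    obtain ⟨l, _, rfl⟩ := Finset.mem_image.mp hB
    exact rtrans (rsymm (mem_cls.mp hi)) (mem_cls.mp hj)
  -- F = Sset π h
  have hFsub : ∀ H ∈ Bs, F ⊆ H := fun H hH => hFeq ▸ Set.sInter_subset_of_mem hH
  have hFS : Sset π h = F := by
    apply Set.Subset.antisymm
    · intro x hx
      rw [hFeq]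
      intro H hH
      obtain ⟨p, q, α, h1, h2, hpq, rfl⟩ := hBsub hH
      have hFH := hFsub _ hH
      have rpq : r p q := ⟨α, fun y hy => hFH hy⟩
      have hx0H : x0 p - x0 q = (α : ℝ) := hFH hx0
      have hB : cls p ∈ π := Finset.mem_image.mpr ⟨p, Finset.mem_univ p, rfl⟩
      have hxe := mem_Sset.mp hx _ hB p (self_mem_cls p) q (mem_cls.mpr rpq)
      have hx0e := key rpq
      show x p - x q = (α : ℝ)
      linarith
    · intro x hx
      rw [mem_Sset]
      intro B hB i hi j hj
      have rij := hrB hB hi hj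
      have := hconst rij x hx
      have := key rij
      linarith
  -- block condition
  have hcond : ∀ B ∈ π, ShiBlockCond m h B := by
    intro B hB
    have halpha : ∀ {p q : Fin n} {α : ℤ}, p ∈ B → q ∈ B → x0 p - x0 q = (α : ℝ) →
        α = (h q : ℤ) - h p := by
      intro p q α hp hq he
      have := key (hrB hB hp hq)
      have : (α : ℝ) = ((((h q : ℤ) - h p) : ℤ) : ℝ) := by push_cast; linarith
      exact_mod_cast this
    constructor
    · -- 0 ∈ h '' B
      obtain ⟨i0, _, hBi0⟩ := Finset.mem_image.mp hB
      obtain ⟨jm, hjm, hjmx⟩ := Finset.mem_image.mp (((cls i0).image x0).max'_mem (clsne i0))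
      refine ⟨jm, by rw [← hBi0]; exact Finset.mem_coe.mpr hjm, ?_⟩
      have h1 : (h jm : ℝ) = M jm - x0 jm := hcast jm
      have h2 : M jm = M i0 := (hMeq (mem_cls.mp hjm)).symm
      have hMi0 : M i0 = ((cls i0).image x0).max' (clsne i0) := rfl
      have : (h jm : ℝ) = 0 := by rw [h1, h2, hMi0, ← hjmx]; ring
      exact_mod_cast this
    · intro a ha hasup b hbdef
      have hfin : (h '' ↑B).Finite := (B.finite_toSet).image h
      have hSupmem : sSup (h '' ↑B) ∈ h '' ↑B := Set.Nonempty.csSup_mem ⟨a, ha⟩ hfin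
      have hSne : {c | c ∈ h '' ↑B ∧ a < c}.Nonempty := ⟨sSup (h '' ↑B), hSupmem, hasup⟩
      have hbmem : b ∈ {c | c ∈ h '' ↑B ∧ a < c} := hbdef ▸ Nat.sInf_mem hSne
      have hble_min : ∀ c ∈ h '' ↑B, a < c → b ≤ c := fun c hc hac =>
        hbdef ▸ Nat.sInf_le ⟨hc, hac⟩
      have hab : a < b := hbmem.2
      by_cases hcase : b < a + m
      · exact ⟨by omega, by omega⟩
      · push_neg at hcase
        -- Wit
        have hwit : ∃ p q : Fin n, ∃ α : ℤ, p ∈ B ∧ q ∈ B ∧ h p ≤ a ∧ a < h q ∧ p < q ∧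
            α ≤ m ∧ x0 p - x0 q = (α : ℝ) := by
          by_contra hW
          push_neg at hW
          have hyF : (fun i => x0 i + (if i ∈ B ∧ h i ≤ a then (1:ℝ) else 0)) ∈ F := by
            rw [hFeq]
            intro H hH
            obtain ⟨p, q, α, h1, h2, hpq, rfl⟩ := hBsub hH
            have hFH := hFsub _ hH
            have rpq : r p q := ⟨α, fun y hy => hFH hy⟩
            have hx0H : x0 p - x0 q = (α : ℝ) := hFH hx0
            have hind : (if p ∈ B ∧ h p ≤ a then (1:ℝ) else 0)
                = (if q ∈ B ∧ h q ≤ a then (1:ℝ) else 0) := by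
              obtain ⟨i0, _, rfl⟩ := Finset.mem_image.mp hB
              by_cases hpB : p ∈ cls i0
              · have hqB : q ∈ cls i0 := mem_cls.mpr (rtrans (mem_cls.mp hpB) rpq)
                have hαd : α = (h q : ℤ) - h p := halpha hpB hqB hx0H
                by_cases hpa : h p ≤ a
                · by_cases hqa : h q ≤ a
                  · simp [hpB, hqB, hpa, hqa]
                  · exact absurd hx0H (by
                      have := hW p q α hpB hqB hpa (by omega) hpq h2
                      exact this)
                · by_cases hqa : h q ≤ a
                  · -- h p > a so h p ≥ b ≥ a + m; α = h q - h p ≤ -m < 1 - m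
                    have hpimg : h p ∈ h '' ↑(cls i0) := ⟨p, by simpa using hpB, rfl⟩
                    have hbp : b ≤ h p := hble_min _ hpimg (by omega)
                    omega
                  · simp [hpB, hqB, hpa, hqa]
              · have hqB : q ∉ cls i0 := fun hqB =>
                  hpB (mem_cls.mpr (rtrans (mem_cls.mp hqB) (rsymm rpq)))
                simp [hpB, hqB]
            show (fun i => x0 i + _) p - _ = (α : ℝ)
            simp only
            rw [hind]
            linarith
          obtain ⟨i1, hi1B, hi1⟩ := ha
          obtain ⟨j1, hj1B, hj1⟩ := hbmem.1
          have hi1B' : i1 ∈ B := by simpa using hi1B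
          have hj1B' : j1 ∈ B := by simpa using hj1B
          have hthis := hconst (hrB hB hi1B' hj1B') _ hyF
          have h1' : (if i1 ∈ B ∧ h i1 ≤ a then (1:ℝ) else 0) = 1 := if_pos ⟨hi1B', by omega⟩
          have h2' : (if j1 ∈ B ∧ h j1 ≤ a then (1:ℝ) else 0) = 0 :=
            if_neg (by rintro ⟨-, hle⟩; omega)
          rw [h1', h2'] at hthis
          linarith
        obtain ⟨p, q, α, hpB, hqB, hpa, hqa, hpq, hαm, hα⟩ := hwit
        have hαd : α = (h q : ℤ) - h p := halpha hpB hqB hα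
        have hqimg : h q ∈ h '' ↑B := ⟨q, by simpa using hqB, rfl⟩
        have hbq : b ≤ h q := hble_min _ hqimg hqa
        refine ⟨by omega, fun hba => ?_⟩
        have hpa' : h p = a := by omega
        have hqb' : h q = b := by omega
        have hfinA : (Fin.val '' {j | j ∈ B ∧ h j = b}).Finite :=
          Set.Finite.image _ (Set.toFinite _)
        calc sInf (Fin.val '' {i | i ∈ B ∧ h i = a}) ≤ p.val :=
              Nat.sInf_le ⟨p, ⟨hpB, hpa'⟩, rfl⟩
          _ < q.val := hpq
          _ ≤ sSup (Fin.val '' {j | j ∈ B ∧ h j = b}) :=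
              le_csSup hfinA.bddAbove ⟨q, ⟨hqB, hqb'⟩, rfl⟩
  exact ⟨π, h, hπne, hπdisj, hπcov, hcond, hFS⟩

/-- The map `(π, h) ↦ ⋂_{B ∈ π} {x | x i + h i = x j + h j for all i, j ∈ B}` is a
bijection from the pairs of a partition of `{1,…,n}` into `k` blocks and a function `h`
satisfying the Shi condition on each block, onto the `k`-dimensional flats of `S^m_n`. -/
theorem shi_flats_bij (m n k : ℕ) (hm : 1 ≤ m) (hn : 1 ≤ n) (hk : 1 ≤ k) :
    Set.BijOn
      (fun p : Finset (Finset (Fin n)) × (Fin n → ℕ) =>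
        ⋂ B ∈ p.1, {x : Fin n → ℝ |
          ∀ i ∈ B, ∀ j ∈ B, x i + (p.2 i : ℝ) = x j + (p.2 j : ℝ)})
      {p : Finset (Finset (Fin n)) × (Fin n → ℕ) |
        IsPartitionInto p.1 k ∧ ∀ B ∈ p.1, ShiBlockCond m p.2 B}
      (Lk (ShiArr m n) k) := by
  refine ⟨?_, ?_, ?_⟩
  · -- MapsTo
    rintro ⟨π, h⟩ ⟨⟨hcard, hne, hdisj, hcov⟩, hcond⟩
    show Sset π h ∈ Lk (ShiArr m n) k
    exact ⟨Sset_mem_flats hm hcond, by rw [dim_Sset h hne hdisj hcov]; exact hcard⟩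
  · -- InjOn
    rintro ⟨π, h⟩ ⟨⟨hcard, hne, hdisj, hcov⟩, hcond⟩ ⟨π', h'⟩
      ⟨⟨hcard', hne', hdisj', hcov'⟩, hcond'⟩ heq
    have heq' : Sset π h = Sset π' h' := heq
    obtain ⟨h1, h2⟩ := Sset_injective (m := m) hne hdisj hcov hne' hdisj' hcov'
      (fun B hB => (hcond B hB).1) (fun B hB => (hcond' B hB).1) heq'
    exact Prod.ext h1 h2
  · -- SurjOn
    rintro F ⟨⟨hFne, Bs, hBsub, hFeq⟩, hdim⟩
    obtain ⟨π, h, hne, hdisj, hcov, hcond, hFS⟩ := surj_aux hm hFne hBsub hFeq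
    have hcard : π.card = k := by
      rw [← dim_Sset h hne hdisj hcov, hFS]; exact hdim
    exact ⟨(π, h), ⟨⟨hcard, hne, hdisj, hcov⟩, hcond⟩, hFS⟩
end

section
/- For all integers m ≥ 0 and n ≥ 1, the number of 1-dimensional flats of the n-dimensional extended Catalan arrangement satisfies |L_1(C^m_n)| = ∑_{ℓ=1}^{n} ℓ! · S(n,ℓ) · m^{ℓ−1}. -/
open Set

/-- Stirling numbers of the second kind: `stirling2 n k` is the number of
partitions of an `n`-element set into `k` nonempty blocks. -/
def stirling2 : ℕ → ℕ → ℕ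
  | 0, 0 => 1
  | 0, _ + 1 => 0
  | _ + 1, 0 => 0
  | n + 1, k + 1 => (k + 1) * stirling2 n (k + 1) + stirling2 n k


/-! ### lines -/

def lineOf {n : ℕ} (v : Fin n → ℤ) : Set (Fin n → ℝ) :=
  {x | ∃ t : ℝ, ∀ i, x i = t + (v i : ℝ)}

lemma lineOf_shift {n : ℕ} (v : Fin n → ℤ) (z : ℤ) :
    lineOf (fun i => v i - z) = lineOf v := by
  ext x
  constructor
  · rintro ⟨t, ht⟩
    exact ⟨t - (z : ℝ), fun i => by rw [ht i]; push_cast; ring⟩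
  · rintro ⟨t, ht⟩
    exact ⟨t + (z : ℝ), fun i => by rw [ht i]; push_cast; ring⟩

lemma flatDim_lineOf {n : ℕ} (hn : 1 ≤ n) (v : Fin n → ℤ) : flatDim (lineOf v) = 1 := by
  set p : Fin n → ℝ := fun i => (v i : ℝ) with hp
  set q : Fin n → ℝ := fun i => (v i : ℝ) + 1 with hq
  have hspan : affineSpan ℝ (lineOf v) = affineSpan ℝ {p, q} := by
    apply le_antisymm
    · rw [affineSpan_le]
      rintro x ⟨t, ht⟩
      have : x = AffineMap.lineMap p q t := by
        funext i
        simp only [AffineMap.lineMap_apply, ht i, hp, hq, Pi.add_apply, Pi.smul_apply,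
          vsub_eq_sub, Pi.sub_apply, vadd_eq_add, smul_eq_mul]
        ring
      rw [this]
      exact AffineMap.lineMap_mem_affineSpan_pair t p q
    · apply affineSpan_mono
      rintro x (rfl | rfl)
      · exact ⟨0, fun i => by simp [hp]⟩
      · exact ⟨1, fun i => by simp [hq]; ring⟩
  rw [flatDim, hspan, direction_affineSpan, vectorSpan_pair]
  have hpq : p -ᵥ q = fun _ => (-1 : ℝ) := by
    funext i; simp [hp, hq]
  rw [hpq]
  apply finrank_span_singleton
  intro h
  have := congrFun h ⟨0, hn⟩
  norm_num at this

/-! ### cumulative sums -/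

def cums {k : ℕ} (g : Fin k → ℕ) : ℕ → ℤ
  | 0 => 0
  | c + 1 => cums g c + (if h : c < k then ((g ⟨c, h⟩ : ℤ) + 1) else 0)

lemma cums_succ {k : ℕ} (g : Fin k → ℕ) {c : ℕ} (h : c < k) :
    cums g (c + 1) = cums g c + ((g ⟨c, h⟩ : ℤ) + 1) := by
  simp [cums, h]

lemma cums_nonneg {k : ℕ} (g : Fin k → ℕ) (c : ℕ) : 0 ≤ cums g c := by
  induction c with
  | zero => simp [cums]
  | succ d ih =>
    rw [cums]
    split <;> omega

lemma cums_lt {k : ℕ} (g : Fin k → ℕ) : ∀ c' : ℕ, c' ≤ k → ∀ c : ℕ, c < c' →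
    cums g c < cums g c' := by
  intro c'
  induction c' with
  | zero => omega
  | succ d ih =>
    intro hd' c hc
    have hd : d < k := hd'
    rw [cums_succ g hd]
    have hg : (0:ℤ) ≤ (g ⟨d, hd⟩ : ℤ) := Int.natCast_nonneg _
    rcases Nat.lt_succ_iff_lt_or_eq.mp hc with h | rfl
    · have := ih (by omega) c h
      omega
    · omega

/-! ### the parameter type -/

abbrev SurjTo (n k : ℕ) := {f : Fin n → Fin k // Function.Surjective f}

abbrev D (m n : ℕ) := Σ k : Fin n, SurjTo n (k.val + 1) × (Fin k.val → Fin m)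

def vD {m n : ℕ} (d : D m n) : Fin n → ℤ :=
  fun i => cums (fun j => (d.2.2 j : ℕ)) (d.2.1.1 i : ℕ)

lemma lineD_mem {m n : ℕ} (hn : 1 ≤ n) (d : D m n) :
    lineOf (vD d) ∈ Lk (CatalanArr m n) 1 := by
  obtain ⟨⟨k, hkn⟩, ⟨f, hf⟩, g⟩ := d
  set v : Fin n → ℤ := fun i => cums (fun j => (g j : ℕ)) (f i : ℕ) with hv
  show lineOf v ∈ Lk (CatalanArr m n) 1
  have hm : (0:ℤ) ≤ (m:ℤ) := Int.natCast_nonneg m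
  refine ⟨⟨⟨fun i => (v i : ℝ), 0, fun i => by simp⟩, ?_⟩, flatDim_lineOf hn v⟩
  refine ⟨{H | ∃ i j : Fin n, ∃ a : ℤ, i < j ∧ -(m:ℤ) ≤ a ∧ a ≤ m ∧ v i - v j = a ∧
      H = hyp n i j a}, ?_, ?_⟩
  · rintro H ⟨i, j, a, h1, h2, h3, _, h5⟩; exact ⟨i, j, a, h1, h2, h3, h5⟩
  · apply Set.Subset.antisymm
    · rintro x ⟨t, ht⟩ H ⟨i, j, a, h1, h2, h3, h4, rfl⟩
      show x i - x j = (a : ℝ)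
      rw [ht i, ht j, ← h4]; push_cast; ring
    · intro y hy
      have E : ∀ i j : Fin n, -(m:ℤ) ≤ v i - v j → v i - v j ≤ m →
          y i - y j = ((v i : ℝ) - (v j : ℝ)) := by
        intro i j h1 h2
        rcases lt_trichotomy i j with hij | rfl | hij
        · have h' : y i - y j = ((v i - v j : ℤ) : ℝ) :=
            hy (hyp n i j (v i - v j)) ⟨i, j, _, hij, h1, h2, rfl, rfl⟩
          push_cast at h'; linarith
        · ring
        · have h' : y j - y i = ((v j - v i : ℤ) : ℝ) :=
            hy (hyp n j i (v j - v i)) ⟨j, i, _, hij, by omega, by omega, rfl, rfl⟩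
          push_cast at h'; linarith
      set rep : Fin (k+1) → Fin n := Function.surjInv hf with hrep
      have hfr : ∀ c, f (rep c) = c := fun c => Function.surjInv_eq hf c
      have hvrep : ∀ c : Fin (k+1), v (rep c) = cums (fun j => (g j : ℕ)) c.val := by
        intro c; rw [hv]; simp only [hfr]
      have key : ∀ c : ℕ, ∀ hc : c < k + 1, y (rep ⟨c, hc⟩) - (v (rep ⟨c, hc⟩) : ℝ)
          = y (rep 0) - (v (rep 0) : ℝ) := by
        intro c
        induction c with
        | zero =>
          intro hc
          have h0 : (⟨0, hc⟩ : Fin (k+1)) = 0 := Fin.ext (by simp)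
          rw [h0]
        | succ c ih =>
          intro hc
          have hck : c < k := by omega
          have hc' : c < k + 1 := by omega
          have hgap : v (rep ⟨c, hc'⟩) - v (rep ⟨c+1, hc⟩) = -((g ⟨c, hck⟩ : ℤ) + 1) := by
            rw [hvrep, hvrep]
            show cums (fun j => (g j : ℕ)) c - cums (fun j => (g j : ℕ)) (c+1) = _
            rw [cums_succ _ hck]
            push_cast
            ring
          have hb : (g ⟨c, hck⟩ : ℤ) + 1 ≤ m := by
            have := (g ⟨c, hck⟩).2
            omega
          have hg0 : (0:ℤ) ≤ (g ⟨c, hck⟩ : ℤ) := Int.natCast_nonneg _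
          have hE := E (rep ⟨c, hc'⟩) (rep ⟨c+1, hc⟩) (by omega) (by omega)
          have hih := ih hc'
          have hcast : ((v (rep ⟨c, hc'⟩) : ℤ) : ℝ) - ((v (rep ⟨c+1, hc⟩) : ℤ) : ℝ)
              = (((v (rep ⟨c, hc'⟩) - v (rep ⟨c+1, hc⟩) : ℤ)) : ℝ) := by push_cast; ring
          linarith [hE, hih]
      refine ⟨y (rep 0) - (v (rep 0) : ℝ), fun i => ?_⟩
      have h0 : v i - v (rep (f i)) = 0 := by
        rw [hv]; simp only [hfr]; ring
      have hE := E i (rep (f i)) (by omega) (by omega)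
      have hk2 := key (f i).val (f i).isLt
      have heta : (⟨(f i).val, (f i).isLt⟩ : Fin (k+1)) = f i := Fin.ext rfl
      rw [heta] at hk2
      have hvc : (v (rep (f i)) : ℝ) = (v i : ℝ) := by
        exact_mod_cast congrArg (fun z : ℤ => (z : ℝ)) (by omega : v (rep (f i)) = v i)
      linarith

lemma mem_lineD {m n : ℕ} (hn : 1 ≤ n) (F : Set (Fin n → ℝ))
    (hF : F ∈ Lk (CatalanArr m n) 1) : ∃ d : D m n, F = lineOf (vD d) := by
  classical
  obtain ⟨⟨⟨x, hx⟩, B, hBA, hFB⟩, hdim⟩ := hF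
  have hm : (0:ℤ) ≤ (m:ℤ) := Int.natCast_nonneg m
  set i₀ : Fin n := ⟨0, hn⟩ with hi₀
  set W : Submodule ℝ (Fin n → ℝ) :=
    { carrier := {w | ∀ i j : Fin n, ∀ a : ℤ, i < j → -(m:ℤ) ≤ a → a ≤ m →
        hyp n i j a ∈ B → w i = w j}
      add_mem' := fun hw hw' i j a h1 h2 h3 h4 => by
        simp only [Pi.add_apply, hw i j a h1 h2 h3 h4, hw' i j a h1 h2 h3 h4]
      zero_mem' := fun i j a _ _ _ _ => rfl
      smul_mem' := fun c w hw i j a h1 h2 h3 h4 => by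
        simp only [Pi.smul_apply, hw i j a h1 h2 h3 h4] } with hW
  have hWmem : ∀ w : Fin n → ℝ, w ∈ W ↔ (∀ i j : Fin n, ∀ a : ℤ, i < j → -(m:ℤ) ≤ a →
      a ≤ m → hyp n i j a ∈ B → w i = w j) := fun w => Iff.rfl
  have hxB : ∀ H ∈ B, x ∈ H := by
    rw [hFB] at hx
    exact fun H hH => hx H hH
  have hFW : F = (AffineSubspace.mk' x W : Set (Fin n → ℝ)) := by
    rw [hFB]
    ext y
    rw [AffineSubspace.mem_coe, AffineSubspace.mem_mk']
    constructor
    · intro hy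
      rw [hWmem]
      intro i j a h1 h2 h3 h4
      have hyh : y i - y j = (a:ℝ) := hy _ h4
      have hxh : x i - x j = (a:ℝ) := hxB _ h4
      show (y - x) i = (y - x) j
      simp only [Pi.sub_apply]
      linarith
    · intro hw H hH
      obtain ⟨i, j, a, h1, h2, h3, rfl⟩ := hBA hH
      have hxh : x i - x j = (a:ℝ) := hxB _ hH
      have h5 : (y -ᵥ x) i = (y -ᵥ x) j := (hWmem _).mp hw i j a h1 h2 h3 hH
      show y i - y j = (a:ℝ)
      simp only [vsub_eq_sub, Pi.sub_apply] at h5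
      linarith
  have hdim' : Module.finrank ℝ W = 1 := by
    rw [flatDim, hFW, AffineSubspace.affineSpan_coe, AffineSubspace.direction_mk'] at hdim
    exact hdim
  have honev : (fun _ => (1:ℝ) : Fin n → ℝ) ∈ W := by
    rw [hWmem]; exact fun i j a _ _ _ _ => rfl
  have hWspan : W = Submodule.span ℝ {(fun _ => (1:ℝ) : Fin n → ℝ)} := by
    symm
    apply Submodule.eq_of_le_of_finrank_eq
    · rw [Submodule.span_le, Set.singleton_subset_iff]; exact honev
    · rw [hdim']
      exact finrank_span_singleton (by
        intro h
        have := congrFun h i₀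
        norm_num at this)
  have hconst : ∀ w ∈ W, ∀ i j : Fin n, w i = w j := by
    intro w hw i j
    rw [hWspan, Submodule.mem_span_singleton] at hw
    obtain ⟨c, rfl⟩ := hw
    simp
  have hint : ∀ i : Fin n, ∃ z : ℤ, x i - x i₀ = (z : ℝ) := by
    by_contra hc
    push_neg at hc
    obtain ⟨i1, hi1⟩ := hc
    set w : Fin n → ℝ := fun i => if ∃ z : ℤ, x i - x i₀ = (z:ℝ) then 1 else 0 with hw
    have hwW : w ∈ W := by
      rw [hWmem]
      intro i j a h1 h2 h3 h4
      have hxh : x i - x j = (a:ℝ) := hxB _ h4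
      have hiff : (∃ z : ℤ, x i - x i₀ = (z:ℝ)) ↔ (∃ z : ℤ, x j - x i₀ = (z:ℝ)) := by
        constructor
        · rintro ⟨z, hz⟩; exact ⟨z - a, by push_cast; linarith⟩
        · rintro ⟨z, hz⟩; exact ⟨z + a, by push_cast; linarith⟩
      simp only [hw]
      rw [if_congr hiff rfl rfl]
    have h1 := hconst w hwW i1 i₀
    simp only [hw] at h1
    rw [if_neg (not_exists.mpr hi1), if_pos ⟨0, by simp⟩] at h1
    norm_num at h1
  choose vz hvz using hint
  have hgap : ∀ c : ℤ, (∃ i, vz i ≤ c) → (∃ j, c < vz j) →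
      ∃ i, c < vz i ∧ vz i ≤ c + m := by
    rintro c ⟨i1, hi1⟩ ⟨j1, hj1⟩
    by_contra hno
    push_neg at hno
    set w : Fin n → ℝ := fun i => if vz i ≤ c then 1 else 0 with hw
    have hwW : w ∈ W := by
      rw [hWmem]
      intro i j a h1 h2 h3 h4
      have hxh : x i - x j = (a:ℝ) := hxB _ h4
      have hvij : vz i - vz j = a := by
        have e1 := hvz i
        have e2 := hvz j
        have : ((vz i - vz j : ℤ) : ℝ) = ((a : ℤ) : ℝ) := by push_cast; linarith
        exact_mod_cast this
      have hiff : vz i ≤ c ↔ vz j ≤ c := by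
        constructor
        · intro h
          by_contra hcj
          push_neg at hcj
          have := hno j hcj
          omega
        · intro h
          by_contra hci
          push_neg at hci
          have := hno i hci
          omega
      simp only [hw]
      rw [if_congr hiff rfl rfl]
    have h1 := hconst w hwW i1 j1
    simp only [hw] at h1
    rw [if_pos hi1, if_neg (by omega)] at h1
    norm_num at h1
  have hFlo : F = lineOf vz := by
    rw [hFW]
    ext y
    rw [AffineSubspace.mem_coe, AffineSubspace.mem_mk']
    constructor
    · intro hyW
      rw [hWspan, Submodule.mem_span_singleton] at hyW
      obtain ⟨cc, hcc⟩ := hyW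
      refine ⟨cc + x i₀, fun i => ?_⟩
      have h1 := congrFun hcc i
      have h2 := hvz i
      simp only [vsub_eq_sub, Pi.sub_apply, Pi.smul_apply, smul_eq_mul, mul_one] at h1
      linarith
    · rintro ⟨t, ht⟩
      rw [hWspan, Submodule.mem_span_singleton]
      refine ⟨t - x i₀, ?_⟩
      funext i
      have h2 := hvz i
      simp only [vsub_eq_sub, Pi.sub_apply, Pi.smul_apply, smul_eq_mul, mul_one]
      rw [ht i]
      linarith
  -- build the combinatorial data
  set T : Finset ℤ := Finset.image vz Finset.univ with hT
  have hTne : T.Nonempty := ⟨vz i₀, Finset.mem_image_of_mem _ (Finset.mem_univ _)⟩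
  have hTpos : 0 < T.card := Finset.card_pos.mpr hTne
  obtain ⟨k, hk⟩ : ∃ k, T.card = k + 1 := ⟨T.card - 1, by omega⟩
  have hkn : k < n := by
    have h1 : T.card ≤ n := le_trans Finset.card_image_le (by simp)
    omega
  set e := T.orderIsoOfFin hk with he
  set val : Fin (k+1) → ℤ := fun c => (e c : ℤ) with hval
  have hvalmono : StrictMono val := fun a b hab => by
    exact_mod_cast e.strictMono hab
  have hmemT : ∀ i, vz i ∈ T := fun i => Finset.mem_image_of_mem _ (Finset.mem_univ _)
  set f : Fin n → Fin (k+1) := fun i => e.symm ⟨vz i, hmemT i⟩ with hf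
  have hvf : ∀ i, val (f i) = vz i := by
    intro i
    rw [hval, hf]
    simp
  have hfsurj : Function.Surjective f := by
    intro c
    have hec : (e c : ℤ) ∈ Finset.image vz Finset.univ := (e c).2
    obtain ⟨i, -, hi⟩ := Finset.mem_image.mp hec
    refine ⟨i, ?_⟩
    show e.symm ⟨vz i, hmemT i⟩ = c
    rw [show (⟨vz i, hmemT i⟩ : T) = e c from Subtype.ext hi]
    exact e.symm_apply_apply c
  have hgappos : ∀ j : Fin k, val j.castSucc < val j.succ :=
    fun j => hvalmono (Fin.castSucc_lt_succ (i := j))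
  have hgapb : ∀ j : Fin k, val j.succ ≤ val j.castSucc + m := by
    intro j
    obtain ⟨i1, hi1⟩ := hfsurj j.castSucc
    obtain ⟨j1, hj1⟩ := hfsurj j.succ
    have h1 : vz i1 ≤ val j.castSucc := by rw [← hvf i1, hi1]
    have h2 : val j.castSucc < vz j1 := by
      rw [← hvf j1, hj1]; exact hgappos j
    obtain ⟨i2, hlt, hle⟩ := hgap (val j.castSucc) ⟨i1, h1⟩ ⟨j1, h2⟩
    have hfi2 : j.succ ≤ f i2 := by
      rw [← hvf i2] at hlt
      by_contra hcon
      push_neg at hcon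
      have h3 : f i2 ≤ j.castSucc := Fin.le_castSucc_iff.mpr hcon
      have := hvalmono.monotone h3
      omega
    calc val j.succ ≤ val (f i2) := hvalmono.monotone hfi2
    _ = vz i2 := hvf i2
    _ ≤ val j.castSucc + m := hle
  set g : Fin k → Fin m := fun j => ⟨(val j.succ - val j.castSucc - 1).toNat, by
    have h1 := hgapb j
    have h2 := hgappos j
    omega⟩ with hg
  have h0k : 0 < k + 1 := Nat.succ_pos k
  have hcums : ∀ c : ℕ, ∀ hc : c < k + 1,
      cums (fun j => (g j : ℕ)) c = val ⟨c, hc⟩ - val ⟨0, h0k⟩ := by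
    intro c
    induction c with
    | zero =>
      intro hc
      simp [cums]
    | succ c ih =>
      intro hc
      have hck : c < k := by omega
      rw [cums_succ _ hck, ih (by omega)]
      have hgv : ((g ⟨c, hck⟩ : ℕ) : ℤ) =
          val (⟨c, hck⟩ : Fin k).succ - val (⟨c, hck⟩ : Fin k).castSucc - 1 := by
        rw [hg]
        exact Int.toNat_of_nonneg (by have := hgappos ⟨c, hck⟩; omega)
      have hcs : (⟨c, hck⟩ : Fin k).castSucc = (⟨c, by omega⟩ : Fin (k+1)) := rfl
      have hsc : (⟨c, hck⟩ : Fin k).succ = (⟨c+1, hc⟩ : Fin (k+1)) := rfl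
      rw [hcs, hsc] at hgv
      have hpe : val (⟨c, by omega⟩ : Fin (k+1)) = val ⟨c, Nat.lt_of_succ_lt hc⟩ := rfl
      rw [hgv]
      have : val ⟨c, Nat.lt_of_succ_lt hc⟩ = val ⟨c, by omega⟩ := rfl
      omega
  refine ⟨⟨⟨k, hkn⟩, ⟨f, hfsurj⟩, g⟩, ?_⟩
  rw [hFlo]
  have hvd : vD ⟨⟨k, hkn⟩, ⟨f, hfsurj⟩, g⟩ = fun i => vz i - val ⟨0, h0k⟩ := by
    funext i
    show cums (fun j => (g j : ℕ)) (f i).val = _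
    rw [hcums (f i).val (f i).isLt]
    have : (⟨(f i).val, (f i).isLt⟩ : Fin (k+1)) = f i := rfl
    rw [this, hvf]
  rw [hvd, lineOf_shift]

/-! ### injectivity -/

lemma lineOf_eq_nor {n : ℕ} {v w : Fin n → ℤ}
    (hv0 : ∀ i, 0 ≤ v i) (hw0 : ∀ i, 0 ≤ w i)
    (hv : ∃ i, v i = 0) (hw : ∃ i, w i = 0)
    (h : lineOf v = lineOf w) : v = w := by
  have hp : (fun i => (v i : ℝ)) ∈ lineOf w := h ▸ ⟨0, fun i => by simp⟩
  obtain ⟨t, ht⟩ := hp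
  obtain ⟨iv, hiv⟩ := hv
  obtain ⟨iw, hiw⟩ := hw
  have h1 : (v iv : ℝ) = t + (w iv : ℝ) := ht iv
  have h2 : (v iw : ℝ) = t + (w iw : ℝ) := ht iw
  have h3 : (0:ℝ) ≤ (w iv : ℝ) := by exact_mod_cast hw0 iv
  have h4 : (0:ℝ) ≤ (v iw : ℝ) := by exact_mod_cast hv0 iw
  rw [hiv] at h1
  rw [hiw] at h2
  push_cast at h1 h2
  have ht0 : t = 0 := by linarith
  funext i
  have h5 : (v i : ℝ) = (w i : ℝ) := by
    have h6 : (v i : ℝ) = t + (w i : ℝ) := ht i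
    rw [ht0] at h6
    linarith
  exact_mod_cast h5

lemma vD_nonneg {m n : ℕ} (d : D m n) (i : Fin n) : 0 ≤ vD d i := cums_nonneg _ _

lemma vD_exists_zero {m n : ℕ} (d : D m n) : ∃ i, vD d i = 0 := by
  obtain ⟨i, hi⟩ := d.2.1.2 0
  refine ⟨i, ?_⟩
  show cums (fun j => (d.2.2 j : ℕ)) (d.2.1.1 i : ℕ) = 0
  rw [hi]
  rfl

lemma cums_fin_strictMono {k : ℕ} (G : Fin k → ℕ) :
    StrictMono (fun c : Fin (k+1) => cums G c.val) :=
  fun a b hab => cums_lt G b.val b.is_le a.val hab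

lemma vD_inj {m n : ℕ} : Function.Injective (vD (m := m) (n := n)) := by
  rintro ⟨⟨k, hkn⟩, ⟨f, hf⟩, g⟩ ⟨⟨k', hkn'⟩, ⟨f', hf'⟩, g'⟩ hvv
  set G : Fin k → ℕ := fun j => (g j : ℕ) with hG
  set G' : Fin k' → ℕ := fun j => (g' j : ℕ) with hG'
  have hvv' : ∀ i, cums G ((f i) : ℕ) = cums G' ((f' i) : ℕ) := fun i => congrFun hvv i
  have himg : ∀ (k0 : ℕ) (f0 : Fin n → Fin (k0+1)), Function.Surjective f0 →
      ∀ (G0 : Fin k0 → ℕ),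
      Finset.image (fun i => cums G0 ((f0 i) : ℕ)) Finset.univ
        = Finset.image (fun c : Fin (k0+1) => cums G0 c.val) Finset.univ := by
    intro k0 f0 hf0 G0
    apply Finset.ext
    intro z
    simp only [Finset.mem_image, Finset.mem_univ, true_and]
    constructor
    · rintro ⟨i, rfl⟩; exact ⟨f0 i, rfl⟩
    · rintro ⟨c, rfl⟩; obtain ⟨i, rfl⟩ := hf0 c; exact ⟨i, rfl⟩
  have hcard : ∀ (k0 : ℕ) (G0 : Fin k0 → ℕ),
      (Finset.image (fun c : Fin (k0+1) => cums G0 c.val) Finset.univ).card = k0 + 1 := by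
    intro k0 G0
    rw [Finset.card_image_of_injective _ (cums_fin_strictMono G0).injective,
      Finset.card_univ, Fintype.card_fin]
  have h1 : k + 1 = k' + 1 := by
    have e1 := himg k f hf G
    have e2 := himg k' f' hf' G'
    have e3 : Finset.image (fun i => cums G ((f i):ℕ)) Finset.univ
        = Finset.image (fun i => cums G' ((f' i):ℕ)) Finset.univ := by
      rw [show (fun i => cums G ((f i):ℕ)) = fun i => cums G' ((f' i):ℕ) from funext hvv']
    rw [← hcard k G, ← hcard k' G', ← e1, ← e2, e3]
  obtain rfl : k = k' := by omega
  have hrange : Set.range (fun c : Fin (k+1) => cums G c.val)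
      = Set.range (fun c : Fin (k+1) => cums G' c.val) := by
    ext z
    simp only [Set.mem_range]
    constructor
    · rintro ⟨c, rfl⟩
      obtain ⟨i, rfl⟩ := hf c
      exact ⟨f' i, (hvv' i).symm⟩
    · rintro ⟨c, rfl⟩
      obtain ⟨i, rfl⟩ := hf' c
      exact ⟨f i, hvv' i⟩
  have hvaleq : (fun c : Fin (k+1) => cums G c.val) = fun c : Fin (k+1) => cums G' c.val := by
    haveI : WellFoundedLT (Fin (k+1)) := inferInstance
    exact (StrictMono.range_inj (cums_fin_strictMono G) (cums_fin_strictMono G')).mp hrange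
  have hGeq : ∀ j : Fin k, G j = G' j := by
    intro j
    have hc1 : cums G j.val = cums G' j.val := congrFun hvaleq ⟨j.val, by omega⟩
    have hc2 : cums G (j.val + 1) = cums G' (j.val + 1) :=
      congrFun hvaleq ⟨j.val + 1, by omega⟩
    rw [cums_succ G j.isLt, cums_succ G' j.isLt] at hc2
    have hj : (⟨j.val, j.isLt⟩ : Fin k) = j := rfl
    rw [hj] at hc2
    omega
  have hgg : g = g' := by
    funext j
    exact Fin.ext (hGeq j)
  have hff : f = f' := by
    funext i
    apply (cums_fin_strictMono G).injective
    show cums G (f i).val = cums G (f' i).val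
    rw [hvv' i]
    exact (congrFun hvaleq (f' i)).symm
  subst hff
  subst hgg
  rfl

lemma sum_shift (n : ℕ) (A : ℕ → ℕ) :
    ∑ l ∈ Finset.Icc 1 n, A l = ∑ k ∈ Finset.range n, A (k+1) := by
  induction n with
  | zero => simp
  | succ n ih =>
    rw [Finset.sum_Icc_succ_top (by omega), ih, Finset.sum_range_succ]


noncomputable def chop {n k : ℕ} (a : Fin (k+1)) (g : Fin n → Fin (k+1))
    (h : ∀ i, g i ≠ a) : Fin n → Fin k :=
  fun i => (Fin.exists_succAbove_eq (h i)).choose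

lemma chop_spec {n k : ℕ} (a : Fin (k+1)) (g : Fin n → Fin (k+1))
    (h : ∀ i, g i ≠ a) (i : Fin n) : a.succAbove (chop a g h i) = g i :=
  (Fin.exists_succAbove_eq (h i)).choose_spec

lemma missing {n k : ℕ} {f : Fin (n+1) → Fin (k+1)} (hf : Function.Surjective f)
    (hg : ¬ Function.Surjective (fun i => f (Fin.castSucc i))) (i : Fin n) :
    f (Fin.castSucc i) ≠ f (Fin.last n) := by
  intro h
  apply hg
  intro b
  obtain ⟨x, hx⟩ := hf b
  rcases Fin.eq_castSucc_or_eq_last x with ⟨y, rfl⟩ | rfl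
  · exact ⟨y, hx⟩
  · exact ⟨i, h.trans hx⟩

noncomputable def surjEquiv (n k : ℕ) :
    {f : Fin (n+1) → Fin (k+1) // Function.Surjective f} ≃
      Fin (k+1) × ({f : Fin n → Fin (k+1) // Function.Surjective f} ⊕
        {f : Fin n → Fin k // Function.Surjective f}) where
  toFun f :=
    ⟨f.1 (Fin.last n),
      if hg : Function.Surjective (fun i => f.1 (Fin.castSucc i)) then .inl ⟨_, hg⟩
      else .inr ⟨chop _ _ (missing f.2 hg), by
        intro c
        have hne : (f.1 (Fin.last n)).succAbove c ≠ f.1 (Fin.last n) := Fin.succAbove_ne _ _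
        obtain ⟨x, hx⟩ := f.2 ((f.1 (Fin.last n)).succAbove c)
        rcases Fin.eq_castSucc_or_eq_last x with ⟨y, rfl⟩ | rfl
        · refine ⟨y, Fin.succAbove_right_injective (p := f.1 (Fin.last n)) ?_⟩
          rw [chop_spec, hx]
        · exact absurd hx.symm hne⟩⟩
  invFun p :=
    match p with
    | ⟨a, .inl g⟩ => ⟨Fin.snoc g.1 a, by
        intro b
        obtain ⟨y, hy⟩ := g.2 b
        exact ⟨Fin.castSucc y, by simpa using hy⟩⟩
    | ⟨a, .inr g⟩ => ⟨Fin.snoc (fun i => a.succAbove (g.1 i)) a, by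
        intro b
        rcases eq_or_ne b a with rfl | hb
        · exact ⟨Fin.last n, by simp⟩
        · obtain ⟨c, hc⟩ := Fin.exists_succAbove_eq hb
          obtain ⟨y, hy⟩ := g.2 c
          exact ⟨Fin.castSucc y, by simpa [hy] using hc⟩⟩
  left_inv f := by
    by_cases hg : Function.Surjective (fun i => f.1 (Fin.castSucc i))
    · simp only [dif_pos hg]
      ext x
      refine Fin.lastCases ?_ (fun i => ?_) x <;> simp
    · simp only [dif_neg hg]
      ext x
      refine Fin.lastCases ?_ (fun i => ?_) x
      · simp
      · simp [chop_spec]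
  right_inv p := by
    rcases p with ⟨a, g | g⟩
    · have h1 : Function.Surjective
          (fun i => (Fin.snoc g.1 a : Fin (n+1) → Fin (k+1)) (Fin.castSucc i)) := by
        simpa [Fin.snoc_castSucc] using g.2
      refine Prod.ext (by simp) ?_
      simp only [dif_pos h1]
      congr 1
      ext i
      simp
    · have h1 : ¬ Function.Surjective
          (fun i => (Fin.snoc (fun i => a.succAbove (g.1 i)) a : Fin (n+1) → Fin (k+1))
            (Fin.castSucc i)) := by
        simp only [Fin.snoc_castSucc]
        intro hs
        obtain ⟨y, hy⟩ := hs a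
        exact Fin.succAbove_ne a (g.1 y) hy
      refine Prod.ext (by simp) ?_
      simp only [dif_neg h1]
      congr 1
      apply Subtype.ext
      funext i
      refine Fin.succAbove_right_injective (p := (Fin.snoc (fun i => a.succAbove (g.1 i)) a
          : Fin (n+1) → Fin (k+1)) (Fin.last n)) ?_
      rw [chop_spec]
      simp

theorem card_surj (n k : ℕ) :
    Fintype.card {f : Fin n → Fin k // Function.Surjective f} =
      k.factorial * stirling2 n k := by
  induction n generalizing k with
  | zero =>
    cases k with
    | zero =>
      rw [Fintype.card_eq_one_iff.mpr ⟨⟨Fin.elim0, fun b => b.elim0⟩, fun y => by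
        ext i; exact i.elim0⟩]
      simp [stirling2]
    | succ k =>
      rw [Fintype.card_eq_zero_iff.mpr ⟨fun f => by obtain ⟨i, -⟩ := f.2 0; exact i.elim0⟩]
      simp [stirling2]
  | succ n ih =>
    cases k with
    | zero =>
      rw [Fintype.card_eq_zero_iff.mpr ⟨fun f => (f.1 0).elim0⟩]
      simp [stirling2]
    | succ k =>
      rw [Fintype.card_congr (surjEquiv n k), Fintype.card_prod, Fintype.card_sum, ih, ih,
        Fintype.card_fin]
      show (k+1) * _ = _
      rw [stirling2, Nat.factorial_succ]
      ring

/-- `|L_1(C^m_n)| = ∑_{ℓ=1}^{n} ℓ! · S(n,ℓ) · m^(ℓ-1)`. -/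
theorem catalan_one_flat_count (m n : ℕ) (hn : 1 ≤ n) :
    (Lk (CatalanArr m n) 1).ncard =
      ∑ l ∈ Finset.Icc 1 n, l.factorial * stirling2 n l * m ^ (l - 1) := by
  classical
  have hset : Lk (CatalanArr m n) 1 = Set.range (fun d : D m n => lineOf (vD d)) := by
    apply Set.Subset.antisymm
    · intro F hF
      obtain ⟨d, hd⟩ := mem_lineD hn F hF
      exact ⟨d, hd.symm⟩
    · rintro F ⟨d, rfl⟩
      exact lineD_mem hn d
  have hinj : Function.Injective (fun d : D m n => lineOf (vD d)) := by
    intro d d' h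
    exact vD_inj (lineOf_eq_nor (vD_nonneg d) (vD_nonneg d')
      (vD_exists_zero d) (vD_exists_zero d') h)
  rw [hset, ← Set.image_univ, Set.ncard_image_of_injective _ hinj, Set.ncard_univ,
    Nat.card_eq_fintype_card]
  rw [Fintype.card_sigma]
  have hterm : ∀ k : Fin n, Fintype.card (SurjTo n (k.val+1) × (Fin k.val → Fin m))
      = (k.val+1).factorial * stirling2 n (k.val+1) * m ^ k.val := by
    intro k
    rw [Fintype.card_prod, card_surj, Fintype.card_fun, Fintype.card_fin, Fintype.card_fin]
  rw [Finset.sum_congr rfl fun k _ => hterm k]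
  rw [Fin.sum_univ_eq_sum_range (fun k => (k+1).factorial * stirling2 n (k+1) * m ^ k)]
  rw [sum_shift n (fun l => l.factorial * stirling2 n l * m ^ (l - 1))]
  apply Finset.sum_congr rfl
  intro i _
  simp
end

section
/- Fix an integer n ≥ 1. The map sending a pair (σ, α) — where σ = (B_1, …, B_ℓ) is an ordered set partition of {1, …, n} (a finite list of pairwise disjoint nonempty subsets whose union is {1, …, n}) and α = (α_1, …, α_{ℓ−1}) is a list of positive integers with length one less than that of σ — to the function h : {1, …, n} → ℕ defined by h(v) = α_1 + ⋯ + α_{i−1} for v ∈ B_i, is a bijection from the set of all such pairs onto the set of functions h : {1, …, n} → ℕ whose range contains 0. -/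
open Set

private lemma hfb_tele (l : List ℕ) (hl : l.Pairwise (· ≤ ·)) :
    ∀ (j : ℕ) (hj : j < l.length),
      ((List.zipWith (fun a b => a - b) l.tail l).take j).sum
        = l[j] - l[0]'(Nat.lt_of_le_of_lt (Nat.zero_le _) hj) := by
  intro j
  induction j with
  | zero => intro hj; simp
  | succ j ih =>
    intro hj
    have hj' : j < l.length := Nat.lt_of_succ_lt hj
    have hzl : j < (List.zipWith (fun a b : ℕ => a - b) l.tail l).length := by
      rw [List.length_zipWith, List.length_tail]; omega
    rw [List.sum_take_succ _ j hzl, ih hj']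
    have he : (List.zipWith (fun a b : ℕ => a - b) l.tail l)[j] = l[j+1] - l[j] := by
      rw [List.getElem_zipWith]
      congr 1
      exact List.getElem_tail (by rw [List.length_tail]; omega)
    rw [he]
    have h0j : l.get ⟨0, Nat.lt_of_le_of_lt (Nat.zero_le _) hj⟩ ≤ l.get ⟨j, hj'⟩ :=
      hl.rel_get_of_le (by exact Nat.zero_le j)
    have hjj : l.get ⟨j, hj'⟩ ≤ l.get ⟨j+1, hj⟩ :=
      hl.rel_get_of_le (by exact Nat.le_succ j)
    simp only [List.get_eq_getElem] at h0j hjj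
    omega

private lemma hfb_sum_take_lt (α : List ℕ) (hpos : ∀ a ∈ α, 0 < a) :
    ∀ {i j : ℕ}, i < j → j ≤ α.length → (α.take i).sum < (α.take j).sum := by
  intro i j hij hj
  induction j with
  | zero => omega
  | succ j ih =>
    have hjl : j < α.length := hj
    rcases Nat.lt_or_ge i j with h | h
    · have h1 : (α.take j).sum ≤ (α.take (j+1)).sum := by
        rw [List.sum_take_succ _ j hjl]; omega
      exact lt_of_lt_of_le (ih h (le_of_lt hjl)) h1
    · have hi : i = j := by omega
      subst hi
      rw [List.sum_take_succ _ i hjl]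
      have := hpos _ (List.getElem_mem hjl)
      omega

private lemma hfb_sum_take_inj (α : List ℕ) (hpos : ∀ a ∈ α, 0 < a)
    {i j : ℕ} (hi : i ≤ α.length) (hj : j ≤ α.length)
    (h : (α.take i).sum = (α.take j).sum) : i = j := by
  rcases Nat.lt_trichotomy i j with hlt | he | hlt
  · exact absurd h (Nat.ne_of_lt (hfb_sum_take_lt α hpos hlt hj))
  · exact he
  · exact absurd h.symm (Nat.ne_of_lt (hfb_sum_take_lt α hpos hlt hi))

private lemma hfb_findIdx_eq {n : ℕ} (σ : List (Finset (Fin n)))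
    (hdisj : σ.Pairwise Disjoint) {v : Fin n} {i : ℕ} (hi : i < σ.length)
    (hv : v ∈ σ[i]) :
    (σ.findIdx fun B => decide (v ∈ B)) = i := by
  rw [List.findIdx_eq hi]
  refine ⟨by simpa using hv, fun j hj => ?_⟩
  simp only [decide_eq_false_iff_not]
  intro hvj
  have hd := (List.pairwise_iff_getElem.mp hdisj) j i (hj.trans hi) hi hj
  exact (Finset.disjoint_left.mp hd hvj) hv

/-- decode map -/
private def hfb_dec {n : ℕ} (h : Fin n → ℕ) : List (Finset (Fin n)) × List ℕ :=
  (((Finset.image h Finset.univ).sort (· ≤ ·)).map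
      fun c => Finset.univ.filter fun v => h v = c,
   List.zipWith (fun a b => a - b) (((Finset.image h Finset.univ).sort (· ≤ ·)).tail)
     ((Finset.image h Finset.univ).sort (· ≤ ·)))

/-- The map sending a pair `(σ, α)` — an ordered set partition `σ = (B_1, …, B_ℓ)` of
`{1,…,n}` together with a list `α = (α_1, …, α_{ℓ-1})` of positive integers of length one
less than `σ` — to the function `h` with `h v = α_1 + ⋯ + α_{i-1}` for `v ∈ B_i` is a
bijection onto the functions `h : {1,…,n} → ℕ` whose range contains `0`. -/
theorem height_function_bij (n : ℕ) (hn : 1 ≤ n) :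
    Set.BijOn
      (fun p : List (Finset (Fin n)) × List ℕ =>
        fun v : Fin n => (p.2.take (p.1.findIdx fun B => decide (v ∈ B))).sum)
      {p : List (Finset (Fin n)) × List ℕ |
        (∀ B ∈ p.1, B.Nonempty) ∧ p.1.Pairwise Disjoint ∧
          (∀ v : Fin n, ∃ B ∈ p.1, v ∈ B) ∧
          (∀ a ∈ p.2, 0 < a) ∧ p.2.length + 1 = p.1.length}
      {h : Fin n → ℕ | 0 ∈ Set.range h} := by
  classical
  set F : List (Finset (Fin n)) × List ℕ → (Fin n → ℕ) :=
    fun p => fun v : Fin n => (p.2.take (p.1.findIdx fun B => decide (v ∈ B))).sum with hF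
  -- Maps to
  have hmt : Set.MapsTo F
      {p : List (Finset (Fin n)) × List ℕ |
        (∀ B ∈ p.1, B.Nonempty) ∧ p.1.Pairwise Disjoint ∧
          (∀ v : Fin n, ∃ B ∈ p.1, v ∈ B) ∧
          (∀ a ∈ p.2, 0 < a) ∧ p.2.length + 1 = p.1.length}
      {h : Fin n → ℕ | 0 ∈ Set.range h} := by
    rintro ⟨σ, α⟩ ⟨hne, hdisj, hcov, hpos, hlen⟩
    have hlen' : α.length + 1 = σ.length := hlen
    have h0 : 0 < σ.length := by omega
    obtain ⟨v, hv⟩ := hne σ[0] (List.getElem_mem h0)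
    refine ⟨v, ?_⟩
    simp only [hF]
    rw [hfb_findIdx_eq σ hdisj h0 hv]
    simp
  -- decode maps to
  have hmt' : Set.MapsTo hfb_dec
      {h : Fin n → ℕ | 0 ∈ Set.range h}
      {p : List (Finset (Fin n)) × List ℕ |
        (∀ B ∈ p.1, B.Nonempty) ∧ p.1.Pairwise Disjoint ∧
          (∀ v : Fin n, ∃ B ∈ p.1, v ∈ B) ∧
          (∀ a ∈ p.2, 0 < a) ∧ p.2.length + 1 = p.1.length} := by
    intro h hh
    set vs : List ℕ := (Finset.image h Finset.univ).sort (· ≤ ·) with hvs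
    have hmem : ∀ c, c ∈ vs ↔ ∃ v, h v = c := by
      intro c
      simp [hvs, Finset.mem_sort]
    have hnd : vs.Nodup := Finset.sort_nodup _ _
    have hsl : vs.Pairwise (· < ·) := (Finset.sortedLT_sort _).pairwise
    have hvslen : 0 < vs.length := by
      rw [List.length_pos_iff]
      intro habs
      have := (hmem (h ⟨0, hn⟩)).mpr ⟨⟨0, hn⟩, rfl⟩
      rw [habs] at this
      simp at this
    refine ⟨?_, ?_, ?_, ?_, ?_⟩
    · rintro B hB
      simp only [hfb_dec, List.mem_map] at hB
      obtain ⟨c, hc, rfl⟩ := hB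
      obtain ⟨v, hv⟩ := (hmem c).mp hc
      exact ⟨v, by simp [hv]⟩
    · refine List.Pairwise.map _ ?_ hnd
      intro a b hab
      rw [Finset.disjoint_left]
      intro v hva hvb
      simp only [Finset.mem_filter] at hva hvb
      exact hab (hva.2 ▸ hvb.2.symm ▸ rfl)
    · intro v
      refine ⟨Finset.univ.filter fun w => h w = h v, ?_, by simp⟩
      exact List.mem_map.mpr ⟨h v, (hmem _).mpr ⟨v, rfl⟩, rfl⟩
    · intro a ha
      simp only [hfb_dec] at ha
      obtain ⟨i, hi, hia⟩ := List.mem_iff_getElem.mp ha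
      rw [List.length_zipWith, List.length_tail, ← hvs] at hi
      have hi1 : i + 1 < vs.length := by omega
      have : vs[i] < vs[i+1] :=
        (List.pairwise_iff_getElem.mp hsl) i (i+1) (by omega) hi1 (by omega)
      have he : a = vs[i+1] - vs[i] := by
        rw [← hia, List.getElem_zipWith]
        congr 1
        exact List.getElem_tail (by rw [List.length_tail]; exact Nat.lt_sub_of_add_lt hi1)
      omega
    · simp only [hfb_dec, List.length_map, List.length_zipWith, List.length_tail, ← hvs]
      omega
  -- Left inverse
  have hli : Set.LeftInvOn hfb_dec F
      {p : List (Finset (Fin n)) × List ℕ |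
        (∀ B ∈ p.1, B.Nonempty) ∧ p.1.Pairwise Disjoint ∧
          (∀ v : Fin n, ∃ B ∈ p.1, v ∈ B) ∧
          (∀ a ∈ p.2, 0 < a) ∧ p.2.length + 1 = p.1.length} := by
    rintro ⟨σ, α⟩ ⟨hne, hdisj, hcov, hpos, hlen⟩
    have hlen' : α.length + 1 = σ.length := hlen
    clear hlen
    set h : Fin n → ℕ := F (σ, α) with hh
    set ℓ := σ.length with hℓ
    -- block index
    have hblk : ∀ v : Fin n, ∃ i, ∃ (hi : i < ℓ), v ∈ σ[i] := by
      intro v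
      obtain ⟨B, hB, hvB⟩ := hcov v
      obtain ⟨i, hi, rfl⟩ := List.mem_iff_getElem.mp hB
      exact ⟨i, hi, hvB⟩
    have hval : ∀ (v : Fin n) (i : ℕ) (hi : i < ℓ), v ∈ σ[i] → h v = (α.take i).sum := by
      intro v i hi hv
      simp only [hh, hF]
      rw [hfb_findIdx_eq σ hdisj hi hv]
    -- image of h
    set vs : List ℕ := (Finset.image h Finset.univ).sort (· ≤ ·) with hvs
    have hmem : ∀ c, c ∈ vs ↔ ∃ v, h v = c := by
      intro c; simp [hvs, Finset.mem_sort]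
    have hnd : vs.Nodup := Finset.sort_nodup _ _
    have hsl : vs.Pairwise (· < ·) := (Finset.sortedLT_sort _).pairwise
    have hSmono : ∀ {i j : ℕ}, i < j → j < ℓ → (α.take i).sum < (α.take j).sum := by
      intro i j hij hj
      exact hfb_sum_take_lt α hpos hij (by omega)
    -- vs = map S (range ℓ)
    have hvseq : vs = (List.range ℓ).map (fun i => (α.take i).sum) := by
      haveI : IsAntisymm ℕ (· < ·) := ⟨fun a b h1 h2 => absurd h1 (asymm h2)⟩
      refine (fun p s => List.Perm.eq_of_pairwise' hsl s p) ?_ ?_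
      · refine (List.perm_ext_iff_of_nodup hnd ?_).mpr ?_
        · refine List.Nodup.map_on ?_ (List.nodup_range (n := ℓ))
          intro x hx y hy hxy
          simp only [List.mem_range] at hx hy
          exact hfb_sum_take_inj α hpos (by omega) (by omega) hxy
        · intro c
          rw [hmem c, List.mem_map]
          constructor
          · rintro ⟨v, rfl⟩
            obtain ⟨i, hi, hvi⟩ := hblk v
            exact ⟨i, List.mem_range.mpr hi, (hval v i hi hvi).symm⟩
          · rintro ⟨i, hi, rfl⟩
            rw [List.mem_range] at hi
            obtain ⟨v, hv⟩ := hne σ[i] (List.getElem_mem hi)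
            exact ⟨v, hval v i hi hv⟩
      · rw [List.pairwise_iff_getElem]
        intro i j hi hj hij
        simp only [List.length_map, List.length_range] at hi hj
        simp only [List.getElem_map, List.getElem_range]
        exact hSmono hij hj
    -- conclude
    have hSinj : ∀ {i j : ℕ}, i < ℓ → j < ℓ → (α.take i).sum = (α.take j).sum → i = j := by
      intro i j hi hj
      exact hfb_sum_take_inj α hpos (by omega) (by omega)
    simp only [hfb_dec]
    rw [← hvs, hvseq]
    refine Prod.ext ?_ ?_
    · show _ = σ
      simp only [List.map_map]
      refine List.ext_getElem (by simp [hℓ]) ?_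
      intro i h1 h2
      simp only [List.length_map, List.length_range] at h1
      simp only [List.getElem_map, List.getElem_range, Function.comp]
      ext v
      simp only [Finset.mem_filter, Finset.mem_univ, true_and]
      constructor
      · intro hv
        obtain ⟨j, hj, hvj⟩ := hblk v
        have := hval v j hj hvj
        rw [this] at hv
        have := hSinj hj h1 hv
        subst this
        exact hvj
      · intro hv
        exact hval v i h1 hv
    · show _ = α
      refine List.ext_getElem ?_ ?_
      · simp only [List.length_zipWith, List.length_tail, List.length_map, List.length_range]
        omega
      · intro i h1 h2
        rw [List.getElem_zipWith]
        have hlm : ((List.range ℓ).map (fun i => (α.take i).sum)).length = ℓ := by simp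
        have h2' : i < α.length := h2
        have hi1 : i + 1 < ℓ := by omega
        have ht : ((List.range ℓ).map (fun i => (α.take i).sum)).tail[i]'(by
            rw [List.length_tail, hlm]; omega) = (α.take (i+1)).sum := by
          rw [List.getElem_tail]
          simp only [List.getElem_map, List.getElem_range]
        have hb : ((List.range ℓ).map (fun i => (α.take i).sum))[i]'(by rw [hlm]; omega)
            = (α.take i).sum := by
          simp only [List.getElem_map, List.getElem_range]
        rw [ht, hb, List.sum_take_succ _ i h2']
        omega
  -- Right inverse
  have hri : Set.RightInvOn hfb_dec F {h : Fin n → ℕ | 0 ∈ Set.range h} := by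
    intro h hh
    set vs : List ℕ := (Finset.image h Finset.univ).sort (· ≤ ·) with hvs
    have hmem : ∀ c, c ∈ vs ↔ ∃ v, h v = c := by
      intro c; simp [hvs, Finset.mem_sort]
    have hnd : vs.Nodup := Finset.sort_nodup _ _
    have hsle : vs.Pairwise (· ≤ ·) := Finset.pairwise_sort _ _
    obtain ⟨v0, hv0⟩ := hh
    have h0vs : (0 : ℕ) ∈ vs := (hmem 0).mpr ⟨v0, hv0⟩
    funext v
    have hv : h v ∈ vs := (hmem (h v)).mpr ⟨v, rfl⟩
    set i := vs.idxOf (h v) with hi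
    have hil : i < vs.length := List.idxOf_lt_length_iff.mpr hv
    have hvi : vs[i] = h v := List.getElem_idxOf hil
    have hfind : ((hfb_dec h).1.findIdx fun B => decide (v ∈ B)) = i := by
      have hil' : i < (hfb_dec h).1.length := by
        simpa only [hfb_dec, List.length_map, ← hvs] using hil
      rw [List.findIdx_eq hil']
      constructor
      · simp only [hfb_dec, ← hvs, List.getElem_map, decide_eq_true_eq, Finset.mem_filter]
        exact ⟨Finset.mem_univ v, hvi.symm⟩
      · intro j hji
        simp only [hfb_dec, ← hvs, List.getElem_map, decide_eq_false_iff_not, Finset.mem_filter]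
        rintro ⟨-, hj⟩
        have hjl : j < vs.length := hji.trans hil
        have : vs[j] = vs[i] := by rw [hvi, hj]
        have := (hnd.getElem_inj_iff).mp this
        omega
    have h0 : vs[0]'(Nat.lt_of_le_of_lt (Nat.zero_le _) hil) = 0 := by
      obtain ⟨k, hk, hk0⟩ := List.mem_iff_getElem.mp h0vs
      have : vs.get ⟨0, Nat.lt_of_le_of_lt (Nat.zero_le _) hil⟩ ≤ vs.get ⟨k, hk⟩ :=
        hsle.rel_get_of_le (by exact Nat.zero_le k)
      simp only [List.get_eq_getElem] at this
      omega
    simp only [hF]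
    rw [hfind]
    have : (hfb_dec h).2 = List.zipWith (fun a b => a - b) vs.tail vs := by
      simp only [hfb_dec, ← hvs]
    rw [this, hfb_tele vs hsle i hil, hvi, h0]
    omega
  exact Set.InvOn.bijOn ⟨hli, hri⟩ hmt hmt'
end

section
/- Let f, g ∈ ℚ⟦X⟧ be formal power series with zero constant term, and for such a series u and integers i, j ≥ 1 define T(u)_{ij} = j! · (coefficient of X^j in u^i) / i!. Then T(u)_{ij} = 0 whenever i > j, and for all i, j ≥ 1 one has T(f ∘ g)_{ij} = ∑_{k=i}^{j} T(f)_{ik} · T(g)_{kj}, where f ∘ g denotes the substitution of g into f (well defined since g has zero constant term). -/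
open Set

/-- Substitution of the power series `g` (with zero constant term) into `f`:
the coefficient of `X^N` in `f ∘ g` is `∑_{i ≤ N} (coeff i f) · (coeff N (g^i))`
(for `g` with zero constant term, `coeff N (g^i) = 0` whenever `i > N`). -/
noncomputable def psSubst (g f : PowerSeries ℚ) : PowerSeries ℚ :=
  PowerSeries.mk fun N =>
    ∑ i ∈ Finset.range (N + 1), PowerSeries.coeff i f * PowerSeries.coeff N (g ^ i)

/-- `T(u)_{ij} = j! · (coefficient of X^j in u^i) / i!`. -/
noncomputable def psT (u : PowerSeries ℚ) (i j : ℕ) : ℚ :=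
  (j.factorial : ℚ) * PowerSeries.coeff j (u ^ i) / (i.factorial : ℚ)

lemma psT_coeff_pow_zero {u : PowerSeries ℚ} (hu : PowerSeries.constantCoeff u = 0)
    {i j : ℕ} (h : j < i) : PowerSeries.coeff j (u ^ i) = 0 := by
  have hx : (PowerSeries.X : PowerSeries ℚ) ∣ u := PowerSeries.X_dvd_iff.mpr hu
  exact (PowerSeries.X_pow_dvd_iff.mp (pow_dvd_pow_of_dvd hx i)) j h

lemma psT_coeff_pow_congr {A B : PowerSeries ℚ} {j : ℕ}
    (h : ∀ m ≤ j, PowerSeries.coeff m A = PowerSeries.coeff m B) (i : ℕ) :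
    ∀ m ≤ j, PowerSeries.coeff m (A ^ i) = PowerSeries.coeff m (B ^ i) := by
  induction i with
  | zero => simp
  | succ i ih =>
    intro m hm
    rw [pow_succ, pow_succ, PowerSeries.coeff_mul, PowerSeries.coeff_mul]
    refine Finset.sum_congr rfl fun p hp => ?_
    rw [Finset.HasAntidiagonal.mem_antidiagonal] at hp
    rw [ih p.1 (by omega), h p.2 (by omega)]

lemma psT_coeff_aeval {g : PowerSeries ℚ} (hg : PowerSeries.constantCoeff g = 0)
    (P : Polynomial ℚ) (m : ℕ) :
    PowerSeries.coeff m (Polynomial.aeval g P)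
      = ∑ k ∈ Finset.range (m + 1), P.coeff k * PowerSeries.coeff m (g ^ k) := by
  have hlt : P.natDegree < max (P.natDegree + 1) (m + 1) :=
    lt_of_lt_of_le (Nat.lt_succ_self _) (le_max_left _ _)
  rw [Polynomial.aeval_eq_sum_range' hlt, map_sum]
  simp only [map_smul, smul_eq_mul]
  symm
  apply Finset.sum_subset (Finset.range_subset_range.2 (le_max_right _ _))
  intro k hk hk'
  simp only [Finset.mem_range] at hk hk'
  rw [psT_coeff_pow_zero hg (by omega), mul_zero]

lemma psT_key {f g : PowerSeries ℚ} (hf : PowerSeries.constantCoeff f = 0)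
    (hg : PowerSeries.constantCoeff g = 0) (i j : ℕ) :
    PowerSeries.coeff j ((psSubst g f) ^ i)
      = ∑ k ∈ Finset.range (j + 1),
          PowerSeries.coeff k (f ^ i) * PowerSeries.coeff j (g ^ k) := by
  set P := PowerSeries.trunc (j + 1) f with hP
  have hPf : ∀ m ≤ j, PowerSeries.coeff m ((P : PowerSeries ℚ)) = PowerSeries.coeff m f := by
    intro m hm
    rw [Polynomial.coeff_coe, hP, PowerSeries.coeff_trunc, if_pos (Nat.lt_succ_of_le hm)]
  have hSB : ∀ m ≤ j,
      PowerSeries.coeff m (psSubst g f) = PowerSeries.coeff m (Polynomial.aeval g P) := by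
    intro m hm
    rw [psT_coeff_aeval hg, psSubst, PowerSeries.coeff_mk]
    refine Finset.sum_congr rfl fun k hk => ?_
    simp only [Finset.mem_range] at hk
    rw [hP, PowerSeries.coeff_trunc, if_pos (by omega)]
  calc PowerSeries.coeff j ((psSubst g f) ^ i)
      = PowerSeries.coeff j ((Polynomial.aeval g P) ^ i) :=
        psT_coeff_pow_congr hSB i j le_rfl
    _ = PowerSeries.coeff j (Polynomial.aeval g (P ^ i)) :=
        congrArg (PowerSeries.coeff j) (map_pow (Polynomial.aeval g) P i).symm
    _ = ∑ k ∈ Finset.range (j + 1), (P ^ i).coeff k * PowerSeries.coeff j (g ^ k) :=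
        psT_coeff_aeval hg _ j
    _ = _ := by
        refine Finset.sum_congr rfl fun k hk => ?_
        simp only [Finset.mem_range] at hk
        have : (P ^ i).coeff k = PowerSeries.coeff k (((P : PowerSeries ℚ)) ^ i) := by
          rw [← Polynomial.coe_pow, Polynomial.coeff_coe]
        rw [this, psT_coeff_pow_congr hPf i k (by omega)]

/-- For power series with zero constant term, `T(u)_{ij} = 0` whenever `i > j`, and
`T(f ∘ g)_{ij} = ∑_{k=i}^{j} T(f)_{ik} · T(g)_{kj}`. -/
theorem psT_mul (f g : PowerSeries ℚ)
    (hf : PowerSeries.constantCoeff f = 0)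
    (hg : PowerSeries.constantCoeff g = 0) :
    (∀ u : PowerSeries ℚ, PowerSeries.constantCoeff u = 0 →
      ∀ i j : ℕ, 1 ≤ i → 1 ≤ j → j < i → psT u i j = 0) ∧
      ∀ i j : ℕ, 1 ≤ i → 1 ≤ j →
        psT (psSubst g f) i j = ∑ k ∈ Finset.Icc i j, psT f i k * psT g k j := by
  constructor
  · intro u hu i j _ _ hji
    unfold psT
    rw [psT_coeff_pow_zero hu hji, mul_zero, zero_div]
  · intro i j hi hj
    unfold psT
    rw [psT_key hf hg i j]
    have hrange : ∑ k ∈ Finset.range (j + 1),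
          PowerSeries.coeff k (f ^ i) * PowerSeries.coeff j (g ^ k)
        = ∑ k ∈ Finset.Icc i j,
          PowerSeries.coeff k (f ^ i) * PowerSeries.coeff j (g ^ k) := by
      symm
      apply Finset.sum_subset
      · intro k hk
        simp only [Finset.mem_Icc] at hk
        simp only [Finset.mem_range]
        omega
      · intro k hk hk'
        simp only [Finset.mem_range] at hk
        simp only [Finset.mem_Icc] at hk'
        rw [psT_coeff_pow_zero hf (by omega), zero_mul]
    rw [hrange, Finset.mul_sum, Finset.sum_div]
    refine Finset.sum_congr rfl fun k hk => ?_
    have h1 : (i.factorial : ℚ) ≠ 0 := Nat.cast_ne_zero.mpr i.factorial_ne_zero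
    have h2 : (k.factorial : ℚ) ≠ 0 := Nat.cast_ne_zero.mpr k.factorial_ne_zero
    field_simp
end
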